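/- arXiv:1710.10820 — 2 statements merged into one kernel-verified Lean document; each statement's English description precedes it below -/
import Mathlib

section
/- Let M be a countable transitive model of ZF⁻. Then Col_≥(ω,Ord)^M is the union of an increasing Ord^M-indexed family of set-sized complete subforcings: Col_≥(ω,Ord)^M = ⋃_{α ∈ Ord^M} Col_≥(ω,α), where Col_≥(ω,α) ∈ M is the suborder of finite partial functions p : ω ⇀ α ∪ {≥β : β ≤ α} with the induced ordering, and each Col_≥(ω,α) is a complete subforcing of Col_≥(ω,Ord)^M, i.e., every maximal antichain of Col_≥(ω,α) remains maximal in Col_≥(ω,Ord)^M. -/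
set_option maxHeartbeats 1000000

set_option autoImplicit false

attribute [local instance] Classical.propDecidable

namespace CF

/-- First-order formulas of the language of set theory with `κ` class-predicate
variables (the languages `L^κ`) and `n` free set variables; `κ = 0` gives the
pure ∈-formulas. There is no class quantification. -/
inductive CFml : ℕ → ℕ → Type
  | mem {κ n : ℕ} (i j : Fin n) : CFml κ n
  | eq {κ n : ℕ} (i j : Fin n) : CFml κ n
  | cls {κ n : ℕ} (X : Fin κ) (i : Fin n) : CFml κ n
  | not {κ n : ℕ} : CFml κ n → CFml κ n
  | or {κ n : ℕ} : CFml κ n → CFml κ n → CFml κ n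
  | ex {κ n : ℕ} : CFml κ (n + 1) → CFml κ n

/-- Satisfaction of such a formula in the structure whose domain is the class `D`,
with class predicates interpreted by `Γ` and variable assignment `v`. -/
def SatC (D : Set ZFSet) : ∀ {κ n : ℕ}, (Fin κ → Set ZFSet) → CFml κ n → (Fin n → ZFSet) → Prop
  | _, _, _, .mem i j, v => v i ∈ v j
  | _, _, _, .eq i j, v => v i = v j
  | _, _, Γ, .cls X i, v => v i ∈ Γ X
  | _, _, Γ, .not φ, v => ¬ SatC D Γ φ v
  | _, _, Γ, .or φ ψ, v => SatC D Γ φ v ∨ SatC D Γ ψ v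
  | _, _, Γ, .ex φ, v => ∃ x ∈ D, SatC D Γ φ (Fin.snoc v x)

/-- Pure ∈-formulas with `n` free variables. -/
abbrev Fml (n : ℕ) : Type := CFml 0 n

/-- Satisfaction of an ∈-formula in `(M, ∈)` (quantifiers relativized to `M`). -/
def Sat (M : ZFSet) {n : ℕ} (φ : Fml n) (v : Fin n → ZFSet) : Prop :=
  SatC M.toSet (fun i => i.elim0) φ v

/-- A `k`-ary relation on `M` is definable (with parameters) over `(M, ∈)`. -/
def DefinableOver (M : ZFSet) {k : ℕ} (S : (Fin k → ZFSet) → Prop) : Prop :=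
  ∃ (m : ℕ) (φ : Fml (k + m)) (a : Fin m → ZFSet), (∀ i, a i ∈ M) ∧
    ∀ v : Fin k → ZFSet, (∀ i, v i ∈ M) → (S v ↔ Sat M φ (Fin.append v a))

/-- The collection of classes of `M` that are definable over `(M,∈)` with parameters. -/
def DefClasses (M : ZFSet) : Set (Set ZFSet) :=
  {S | S ⊆ M.toSet ∧ DefinableOver M (fun v : Fin 1 → ZFSet => v 0 ∈ S)}

/-- `M` is a countable transitive model of `ZF⁻` (`ZF` without the power set axiom,
with Collection instead of Replacement), stated semantically via
the closure conditions that satisfaction of the `ZF⁻`-axioms imposes on a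
transitive set (Foundation is automatic for transitive sets). -/
structure IsCTM (M : ZFSet) : Prop where
  countable : M.toSet.Countable
  transitive : M.IsTransitive
  empty_mem : (∅ : ZFSet) ∈ M
  pairing : ∀ x ∈ M, ∀ y ∈ M, ({x, y} : ZFSet) ∈ M
  union : ∀ x ∈ M, (ZFSet.sUnion x : ZFSet) ∈ M
  infinity : ZFSet.omega ∈ M
  separation : ∀ (m : ℕ) (φ : Fml (m + 1)) (a : Fin m → ZFSet), (∀ i, a i ∈ M) →
    ∀ x ∈ M, ZFSet.sep (fun y => Sat M φ (Fin.snoc a y)) x ∈ M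
  collection : ∀ (m : ℕ) (φ : Fml (m + 2)) (a : Fin m → ZFSet), (∀ i, a i ∈ M) →
    ∀ x ∈ M, (∀ y ∈ x, ∃ z ∈ M, Sat M φ (Fin.snoc (Fin.snoc a y) z)) →
      ∃ b ∈ M, ∀ y ∈ x, ∃ z ∈ b, Sat M φ (Fin.snoc (Fin.snoc a y) z)

/-- `x` is a (von Neumann) ordinal. -/
def IsOrdZ (x : ZFSet) : Prop := x.IsTransitive ∧ ∀ y ∈ x, ZFSet.IsTransitive y

/-- `α` is an ordinal of the model `M`. -/
def IsOrdIn (M α : ZFSet) : Prop := α ∈ M ∧ IsOrdZ α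
/-- `f` is a (set-coded) function: a set of Kuratowski pairs which is functional. -/
def isFuncZ (f : ZFSet) : Prop :=
  (∀ x ∈ f, ∃ a b : ZFSet, x = ZFSet.pair a b) ∧
  ∀ a b b' : ZFSet, ZFSet.pair a b ∈ f → ZFSet.pair a b' ∈ f → b = b'

/-- `f` is injective (as a set-coded relation). -/
def isInjZ (f : ZFSet) : Prop :=
  ∀ a a' b : ZFSet, ZFSet.pair a b ∈ f → ZFSet.pair a' b ∈ f → a = a'

/-- Domain of a set-coded relation. -/
def domZ (f : ZFSet) : Set ZFSet := {a | ∃ b, ZFSet.pair a b ∈ f}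

/-- Range of a set-coded relation. -/
def ranZ (f : ZFSet) : Set ZFSet := {b | ∃ a, ZFSet.pair a b ∈ f}

/-- A set-coded binary relation is acyclic iff its transitive closure is irreflexive. -/
def acyclicZ (e : ZFSet) : Prop :=
  ∀ a : ZFSet, ¬ Relation.TransGen (fun x y => ZFSet.pair x y ∈ e) a a

/-- The ordered triple `⟨d, e, f⟩`. -/
def tripleZ (d e f : ZFSet) : ZFSet := ZFSet.pair d (ZFSet.pair e f)
/-- The symbol `≥α`, coded as the set `⟨α, α⟩` (an element of `M` that is not an
ordinal, distinct for distinct `α`). -/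
def geqSym (α : ZFSet) : ZFSet := ZFSet.pair α α

/-- `Col_≥(ω, Ord)^M`: finite partial functions from `ω` into
`Ord^M ∪ {≥α ∣ α ∈ Ord^M}`. -/
def ColGeqP (M : ZFSet) : Set ZFSet :=
  {p | isFuncZ p ∧ p.toSet.Finite ∧ (∀ a, a ∈ domZ p → a ∈ ZFSet.omega) ∧
    (∀ b, b ∈ ranZ p → (IsOrdIn M b ∨ ∃ α, IsOrdIn M α ∧ b = geqSym α))}

/-- The ordering of `Col_≥(ω, Ord)^M`: `p ≤ q` iff `dom p ⊇ dom q` and for each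
`n ∈ dom q` either `p(n) = q(n)`, or `q(n)` is `≥α` and `p(n) ∈ {β, ≥β}` for
some `β ≥ α`. -/
def ColGeqLe (M : ZFSet) (p q : ZFSet) : Prop :=
  (∀ a, a ∈ domZ q → a ∈ domZ p) ∧
  ∀ n v : ZFSet, ZFSet.pair n v ∈ q →
    (ZFSet.pair n v ∈ p ∨
      ∃ α, IsOrdIn M α ∧ v = geqSym α ∧
        ∃ β, IsOrdIn M β ∧ (α = β ∨ α ∈ β) ∧
          (ZFSet.pair n β ∈ p ∨ ZFSet.pair n (geqSym β) ∈ p))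

/-- `Col_≥(ω, α)`: the suborder of conditions with values in
`α ∪ {≥β ∣ β ≤ α}`. -/
def ColGeqBddP (α : ZFSet) : Set ZFSet :=
  {p | isFuncZ p ∧ p.toSet.Finite ∧ (∀ a, a ∈ domZ p → a ∈ ZFSet.omega) ∧
    (∀ b, b ∈ ranZ p → (b ∈ α ∨ ∃ β : ZFSet, (β ∈ α ∨ β = α) ∧ b = geqSym β))}
/-! ### derived connectives -/

def CFml.and {κ n : ℕ} (φ ψ : CFml κ n) : CFml κ n := CFml.not (CFml.or (CFml.not φ) (CFml.not ψ))
def CFml.imp {κ n : ℕ} (φ ψ : CFml κ n) : CFml κ n := (CFml.not φ).or ψ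
def CFml.iff' {κ n : ℕ} (φ ψ : CFml κ n) : CFml κ n := (φ.imp ψ).and (ψ.imp φ)
def CFml.all {κ n : ℕ} (φ : CFml κ (n + 1)) : CFml κ n := .not (.ex (.not φ))

section satlemmas
variable {D : Set ZFSet} {κ n : ℕ} {Γ : Fin κ → Set ZFSet} {v : Fin n → ZFSet}

@[simp] lemma satC_mem {i j : Fin n} : SatC D Γ (.mem i j) v ↔ v i ∈ v j := by simp [SatC]
@[simp] lemma satC_eq {i j : Fin n} : SatC D Γ (.eq i j) v ↔ v i = v j := by simp [SatC]
@[simp] lemma satC_not {φ : CFml κ n} : SatC D Γ (.not φ) v ↔ ¬ SatC D Γ φ v := by simp [SatC]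
@[simp] lemma satC_or {φ ψ : CFml κ n} : SatC D Γ (.or φ ψ) v ↔ SatC D Γ φ v ∨ SatC D Γ ψ v := by simp [SatC]
@[simp] lemma satC_ex {φ : CFml κ (n+1)} :
    SatC D Γ (.ex φ) v ↔ ∃ x ∈ D, SatC D Γ φ (Fin.snoc v x) := by simp [SatC]
@[simp] lemma satC_and {φ ψ : CFml κ n} :
    SatC D Γ (φ.and ψ) v ↔ SatC D Γ φ v ∧ SatC D Γ ψ v := by
  simp [CFml.and, SatC]
@[simp] lemma satC_imp {φ ψ : CFml κ n} :
    SatC D Γ (φ.imp ψ) v ↔ (SatC D Γ φ v → SatC D Γ ψ v) := by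
  simp [CFml.imp, SatC]; tauto
@[simp] lemma satC_iff {φ ψ : CFml κ n} :
    SatC D Γ (φ.iff' ψ) v ↔ (SatC D Γ φ v ↔ SatC D Γ ψ v) := by
  simp [CFml.iff', satC_and, satC_imp]; tauto
@[simp] lemma satC_all {φ : CFml κ (n+1)} :
    SatC D Γ (.all φ) v ↔ ∀ x ∈ D, SatC D Γ φ (Fin.snoc v x) := by
  simp [CFml.all, SatC]

end satlemmas

/-! ### natZ and omega -/

open ZFSet

@[simp] lemma ZFSet.mem_toSet (x y : ZFSet) : x ∈ y.toSet ↔ x ∈ y := Iff.rfl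
lemma ZFSet.toSet_empty : (∅ : ZFSet).toSet = ∅ := ZFSet.coe_empty
lemma ZFSet.toSet_insert (x y : ZFSet) : (insert x y).toSet = insert x y.toSet :=
  ZFSet.coe_insert x y
lemma ZFSet.toSet_inj {x y : ZFSet} : x.toSet = y.toSet ↔ x = y :=
  ⟨fun h => SetLike.coe_injective h, fun h => h ▸ rfl⟩

def natZ (n : ℕ) : ZFSet := .mk (PSet.ofNat n)

lemma natZ_zero : natZ 0 = ∅ := rfl
lemma natZ_succ (n : ℕ) : natZ (n+1) = insert (natZ n) (natZ n) := rfl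
lemma natZ_mem_omega (n : ℕ) : natZ n ∈ ZFSet.omega := ⟨⟨n⟩, PSet.Equiv.rfl⟩
lemma mem_omega_iff {x : ZFSet} : x ∈ ZFSet.omega ↔ ∃ n : ℕ, x = natZ n := by
  constructor
  · intro h
    induction x using Quotient.inductionOn with
    | h x => obtain ⟨⟨n⟩, h⟩ := h; exact ⟨n, ZFSet.sound h⟩
  · rintro ⟨n, rfl⟩; exact natZ_mem_omega n

lemma mem_natZ_succ {x : ZFSet} {n : ℕ} : x ∈ natZ (n+1) ↔ x = natZ n ∨ x ∈ natZ n := by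
  rw [natZ_succ]; exact ZFSet.mem_insert_iff

lemma natZ_toSet_finite (n : ℕ) : (natZ n).toSet.Finite := by
  induction n with
  | zero => rw [natZ_zero, ZFSet.toSet_empty]; exact Set.finite_empty
  | succ n ih => rw [natZ_succ, ZFSet.toSet_insert]; exact ih.insert _

lemma natZ_subset_omega (n : ℕ) : ∀ x ∈ natZ n, x ∈ ZFSet.omega := by
  induction n with
  | zero => intro x hx; rw [natZ_zero] at hx; exact absurd hx (ZFSet.notMem_empty x)
  | succ n ih =>
    intro x hx
    rcases mem_natZ_succ.1 hx with rfl | hx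
    · exact natZ_mem_omega n
    · exact ih x hx

lemma natZ_mono {m n : ℕ} (h : m ≤ n) : ∀ x ∈ natZ m, x ∈ natZ n := by
  induction n with
  | zero =>
    have hm : m = 0 := Nat.le_zero.mp h
    subst hm; exact fun x hx => hx
  | succ n ih =>
    intro x hx
    rcases Nat.lt_or_ge m (n+1) with h' | h'
    · exact mem_natZ_succ.2 (Or.inr (ih (by omega) x hx))
    · have hm : m = n + 1 := by omega
      subst hm; exact hx

lemma bounded_of_finite {s : Set ZFSet} (hfin : s.Finite) (hsub : ∀ x ∈ s, x ∈ ZFSet.omega) :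
    ∃ n : ℕ, ∀ x ∈ s, x ∈ natZ n := by
  refine Set.Finite.induction_on
    (motive := fun s _ => (∀ x ∈ s, x ∈ ZFSet.omega) → ∃ n : ℕ, ∀ x ∈ s, x ∈ natZ n)
    _ hfin (fun _ => ⟨0, by simp⟩) ?_ hsub
  rintro a s ha hs ih hsub'
  obtain ⟨n, hn⟩ := ih (fun x hx => hsub' x (Set.mem_insert_of_mem a hx))
  obtain ⟨k, hk⟩ := mem_omega_iff.1 (hsub' a (Set.mem_insert a s))
  subst hk
  refine ⟨max (k+1) n, ?_⟩
  rintro x (rfl | hx)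
  · exact natZ_mono (Nat.le_max_left _ _) _ (mem_natZ_succ.2 (Or.inl rfl))
  · exact natZ_mono (Nat.le_max_right _ _) _ (hn x hx)


/-! ### ordinal lemmas -/

lemma IsOrdZ.empty : IsOrdZ ∅ :=
  ⟨ZFSet.isTransitive_empty, fun y hy => absurd hy (ZFSet.notMem_empty y)⟩

lemma IsOrdZ.mem {α x : ZFSet} (h : IsOrdZ α) (hx : x ∈ α) : IsOrdZ x :=
  ⟨h.2 x hx, fun y hy => h.2 y (h.1.mem_trans hy hx)⟩

lemma IsOrdZ.union {α β : ZFSet} (hα : IsOrdZ α) (hβ : IsOrdZ β) : IsOrdZ (α ∪ β) := by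
  refine ⟨hα.1.union hβ.1, fun y hy => ?_⟩
  rcases ZFSet.mem_union.1 hy with h | h
  · exact hα.2 y h
  · exact hβ.2 y h

lemma IsOrdZ.succ {α : ZFSet} (hα : IsOrdZ α) : IsOrdZ (insert α α) := by
  constructor
  · intro y hy
    rcases ZFSet.mem_insert_iff.1 hy with rfl | hy'
    · exact fun z hz => ZFSet.mem_insert_of_mem _ hz
    · exact fun z hz => ZFSet.mem_insert_of_mem _ (hα.1.mem_trans hz hy')
  · intro y hy
    rcases ZFSet.mem_insert_iff.1 hy with rfl | hy'
    · exact hα.1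
    · exact hα.2 y hy'

lemma ordTrichotomy : ∀ α : ZFSet, IsOrdZ α → ∀ β : ZFSet, IsOrdZ β →
    α ∈ β ∨ α = β ∨ β ∈ α := by
  intro α
  induction α using ZFSet.inductionOn with
  | h α ihα =>
    intro hα β
    induction β using ZFSet.inductionOn with
    | h β ihβ =>
      intro hβ
      by_cases hab : α ∈ β
      · exact Or.inl hab
      by_cases hba : β ∈ α
      · exact Or.inr (Or.inr hba)
      refine Or.inr (Or.inl (ZFSet.ext fun x => ⟨fun hx => ?_, fun hx => ?_⟩))
      · rcases ihα x hx (hα.mem hx) β hβ with h | h | h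
        · exact h
        · exact absurd (h ▸ hx) hba
        · exact absurd (hα.1.mem_trans h hx) hba
      · rcases ihβ x hx (hβ.mem hx) with h | h | h
        · exact absurd (hβ.1.mem_trans h hx) hab
        · exact absurd (h ▸ hx) hab
        · exact h

/-! ### fst / snd for coded pairs -/

noncomputable def fstZ (w : ZFSet) : ZFSet :=
  if h : ∃ a b : ZFSet, w = ZFSet.pair a b then h.choose else ∅

lemma fstZ_pair (a b : ZFSet) : fstZ (ZFSet.pair a b) = a := by
  have h : ∃ a' b' : ZFSet, ZFSet.pair a b = ZFSet.pair a' b' := ⟨a, b, rfl⟩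
  rw [fstZ, dif_pos h]
  obtain ⟨b', hb'⟩ := h.choose_spec
  exact ((ZFSet.pair_inj.mp hb').1).symm

lemma mem_of_pair_mem_left {M a b : ZFSet} (hM : IsCTM M) (h : ZFSet.pair a b ∈ M) :
    a ∈ M := by
  have h1 : ({a} : ZFSet) ∈ ZFSet.pair a b := by
    rw [ZFSet.pair]; exact ZFSet.mem_insert _ _
  exact hM.transitive.mem_trans (ZFSet.mem_singleton.2 rfl)
    (hM.transitive.mem_trans h1 h)

lemma mem_of_pair_mem_right {M a b : ZFSet} (hM : IsCTM M) (h : ZFSet.pair a b ∈ M) :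
    b ∈ M := by
  have h1 : ({a, b} : ZFSet) ∈ ZFSet.pair a b := by
    rw [ZFSet.pair]
    exact ZFSet.mem_insert_of_mem _ (ZFSet.mem_insert _ _)
  exact hM.transitive.mem_trans (ZFSet.mem_pair.2 (Or.inr rfl))
    (hM.transitive.mem_trans h1 h)

/-! ### closure properties of M -/

namespace IsCTM
variable {M : ZFSet}

lemma memT (hM : IsCTM M) {x y : ZFSet} (hx : x ∈ y) (hy : y ∈ M) : x ∈ M :=
  hM.transitive.mem_trans hx hy

lemma sing (hM : IsCTM M) {x : ZFSet} (hx : x ∈ M) : ({x} : ZFSet) ∈ M := by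
  have := hM.pairing x hx x hx
  rwa [ZFSet.pair_eq_singleton] at this

lemma union2 (hM : IsCTM M) {x y : ZFSet} (hx : x ∈ M) (hy : y ∈ M) : x ∪ y ∈ M := by
  have h := hM.union _ (hM.pairing x hx y hy)
  rwa [ZFSet.sUnion_pair] at h

lemma insertM (hM : IsCTM M) {x y : ZFSet} (hx : x ∈ M) (hy : y ∈ M) : insert x y ∈ M := by
  have h : insert x y = {x} ∪ y := by
    apply ZFSet.ext; intro z
    simp [ZFSet.mem_insert_iff, ZFSet.mem_union, ZFSet.mem_singleton]
  rw [h]; exact hM.union2 (hM.sing hx) hy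

lemma pairZ (hM : IsCTM M) {x y : ZFSet} (hx : x ∈ M) (hy : y ∈ M) : ZFSet.pair x y ∈ M := by
  rw [ZFSet.pair]; exact hM.pairing _ (hM.sing hx) _ (hM.pairing x hx y hy)

lemma geqSymM (hM : IsCTM M) {x : ZFSet} (hx : x ∈ M) : geqSym x ∈ M := hM.pairZ hx hx

lemma succM (hM : IsCTM M) {x : ZFSet} (hx : x ∈ M) : insert x x ∈ M := hM.insertM hx hx

lemma codeFinite (hM : IsCTM M) {s : Set ZFSet} (hfin : s.Finite) (hsub : ∀ x ∈ s, x ∈ M) :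
    ∃ z : ZFSet, z ∈ M ∧ z.toSet = s := by
  refine Set.Finite.induction_on
    (motive := fun s _ => (∀ x ∈ s, x ∈ M) → ∃ z : ZFSet, z ∈ M ∧ z.toSet = s)
    _ hfin (fun _ => ⟨∅, hM.empty_mem, ZFSet.toSet_empty⟩) ?_ hsub
  rintro a s _ _ ih hsub'
  obtain ⟨z, hzM, hz⟩ := ih (fun x hx => hsub' x (Set.mem_insert_of_mem a hx))
  exact ⟨insert a z, hM.insertM (hsub' a (Set.mem_insert a s)) hzM,
    by rw [ZFSet.toSet_insert, hz]⟩

lemma memFin (hM : IsCTM M) {z : ZFSet} (hfin : z.toSet.Finite) (hsub : ∀ x ∈ z, x ∈ M) : z ∈ M := by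
  obtain ⟨z', hz'M, hz'⟩ := hM.codeFinite hfin (fun x hx => hsub x hx)
  rwa [ZFSet.toSet_inj.1 hz'] at hz'M

end IsCTM

/-- a ZFSet with any prescribed finite extension exists -/
lemma exists_code_finite {s : Set ZFSet} (hfin : s.Finite) : ∃ z : ZFSet, z.toSet = s := by
  refine Set.Finite.induction_on (motive := fun s _ => ∃ z : ZFSet, z.toSet = s)
    _ hfin ⟨∅, ZFSet.toSet_empty⟩ ?_
  rintro a s _ _ ⟨z, hz⟩
  exact ⟨insert a z, by rw [ZFSet.toSet_insert, hz]⟩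

/-! ### real finite partial functions -/

def realPF (n T p : ZFSet) : Prop :=
  isFuncZ p ∧ ∀ a c : ZFSet, ZFSet.pair a c ∈ p → a ∈ n ∧ c ∈ T

lemma realPF_finite {n T p : ZFSet} (h : realPF n T p) (hn : n.toSet.Finite) :
    p.toSet.Finite := by
  apply Set.Finite.of_finite_image (f := fstZ)
  · apply hn.subset
    rintro _ ⟨w, hw, rfl⟩
    obtain ⟨a, c, rfl⟩ := h.1.1 w hw
    rw [fstZ_pair]
    exact (h.2 a c hw).1
  · intro w1 h1 w2 h2 he
    obtain ⟨a1, c1, rfl⟩ := h.1.1 w1 h1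
    obtain ⟨a2, c2, rfl⟩ := h.1.1 w2 h2
    rw [fstZ_pair, fstZ_pair] at he
    subst he
    rw [h.1.2 a1 c1 c2 h1 h2]

lemma domZ_finite {p : ZFSet} (hfun : isFuncZ p) (hfin : p.toSet.Finite) :
    (domZ p).Finite := by
  apply (hfin.image fstZ).subset
  rintro a ⟨c, hc⟩
  exact ⟨ZFSet.pair a c, hc, fstZ_pair a c⟩

lemma realPF_memM {M n T p : ZFSet} (hM : IsCTM M) (h : realPF n T p)
    (hn : n ∈ M) (hT : T ∈ M) (hfin : p.toSet.Finite) : p ∈ M := by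
  apply hM.memFin hfin
  intro w hw
  obtain ⟨a, c, rfl⟩ := h.1.1 w hw
  obtain ⟨ha, hc⟩ := h.2 a c hw
  exact hM.pairZ (hM.memT ha hn) (hM.memT hc hT)


/-! ### relativized membership characterizations -/

section REL
variable {M : ZFSet}

lemma relSing (hM : IsCTM M) {y z : ZFSet} (hy : y ∈ M) (hz : z ∈ M) :
    (∀ x ∈ M.toSet, (x ∈ y ↔ x = z)) ↔ y = {z} := by
  constructor
  · intro h
    apply ZFSet.ext; intro x
    rw [ZFSet.mem_singleton]
    constructor
    · intro hx; exact (h x (hM.memT hx hy)).1 hx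
    · rintro rfl; exact (h x hz).2 rfl
  · intro h x _; rw [h, ZFSet.mem_singleton]

lemma relPairSet (hM : IsCTM M) {y z w : ZFSet} (hy : y ∈ M) (hz : z ∈ M) (hw : w ∈ M) :
    (∀ x ∈ M.toSet, (x ∈ y ↔ (x = z ∨ x = w))) ↔ y = {z, w} := by
  constructor
  · intro h
    apply ZFSet.ext; intro x
    rw [ZFSet.mem_pair]
    constructor
    · intro hx; exact (h x (hM.memT hx hy)).1 hx
    · rintro (rfl | rfl)
      · exact (h x hz).2 (Or.inl rfl)
      · exact (h x hw).2 (Or.inr rfl)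
  · intro h x _; rw [h, ZFSet.mem_pair]

lemma mem_pairZ_iff {a b x : ZFSet} : x ∈ ZFSet.pair a b ↔ (x = {a} ∨ x = {a, b}) := by
  rw [ZFSet.pair]; exact ZFSet.mem_pair

lemma relOP (hM : IsCTM M) {y a b : ZFSet} (hy : y ∈ M) (ha : a ∈ M) (hb : b ∈ M) :
    (∀ x ∈ M.toSet, (x ∈ y ↔ (x = {a} ∨ x = {a, b}))) ↔ y = ZFSet.pair a b := by
  constructor
  · intro h
    apply ZFSet.ext; intro x
    rw [mem_pairZ_iff]
    constructor
    · intro hx; exact (h x (hM.memT hx hy)).1 hx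
    · intro hx
      refine (h x ?_).2 hx
      rcases hx with rfl | rfl
      · exact hM.sing ha
      · exact hM.pairing a ha b hb
  · intro h x _; rw [h, mem_pairZ_iff]

lemma relEmpty (hM : IsCTM M) {y : ZFSet} (hy : y ∈ M) :
    (∀ x ∈ M.toSet, x ∉ y) ↔ y = ∅ := by
  constructor
  · intro h
    rw [ZFSet.eq_empty]
    intro x hx
    exact h x (hM.memT hx hy) hx
  · rintro rfl x _
    exact ZFSet.notMem_empty x

lemma relUnion (hM : IsCTM M) {w p q : ZFSet} (hw : w ∈ M) (hp : p ∈ M) (hq : q ∈ M) :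
    (∀ x ∈ M.toSet, (x ∈ w ↔ (x ∈ p ∨ x ∈ q))) ↔ w = p ∪ q := by
  constructor
  · intro h
    apply ZFSet.ext; intro x
    rw [ZFSet.mem_union]
    constructor
    · intro hx; exact (h x (hM.memT hx hw)).1 hx
    · rintro (hx | hx)
      · exact (h x (hM.memT hx hp)).2 (Or.inl hx)
      · exact (h x (hM.memT hx hq)).2 (Or.inr hx)
  · intro h x _; rw [h, ZFSet.mem_union]

end REL

/-! ### concrete formulas -/

def vSingF {κ n : ℕ} (w a : Fin n) : CFml κ n :=
  CFml.all ((CFml.mem (Fin.last n) w.castSucc).iff' (CFml.eq (Fin.last n) a.castSucc))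

def vPairSetF {κ n : ℕ} (w a b : Fin n) : CFml κ n :=
  CFml.all ((CFml.mem (Fin.last n) w.castSucc).iff'
    (CFml.or (CFml.eq (Fin.last n) a.castSucc) (CFml.eq (Fin.last n) b.castSucc)))

def vOPF {κ n : ℕ} (x a b : Fin n) : CFml κ n :=
  CFml.all ((CFml.mem (Fin.last n) x.castSucc).iff'
    (CFml.or (vSingF (Fin.last n) a.castSucc) (vPairSetF (Fin.last n) a.castSucc b.castSucc)))

def opMemF {κ n : ℕ} (a b p : Fin n) : CFml κ n :=
  CFml.ex ((vOPF (Fin.last n) a.castSucc b.castSucc).and (CFml.mem (Fin.last n) p.castSucc))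

def emptyF {κ n : ℕ} (z : Fin n) : CFml κ n :=
  CFml.all (CFml.not (CFml.mem (Fin.last n) z.castSucc))

def vUnionF {κ n : ℕ} (w p q : Fin n) : CFml κ n :=
  CFml.all ((CFml.mem (Fin.last n) w.castSucc).iff'
    (CFml.or (CFml.mem (Fin.last n) p.castSucc) (CFml.mem (Fin.last n) q.castSucc)))

def isFunF {κ n : ℕ} (p : Fin n) : CFml κ n :=
  (CFml.all ((CFml.mem (Fin.last n) p.castSucc).imp
    (CFml.ex (CFml.ex (vOPF ((Fin.last n).castSucc.castSucc)
      ((Fin.last (n+1)).castSucc) (Fin.last (n+2))))))).and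
  (CFml.all (CFml.all (CFml.all
    (((opMemF ((Fin.last n).castSucc.castSucc) ((Fin.last (n+1)).castSucc)
        (p.castSucc.castSucc.castSucc)).and
      (opMemF ((Fin.last n).castSucc.castSucc) (Fin.last (n+2))
        (p.castSucc.castSucc.castSucc))).imp
    (CFml.eq ((Fin.last (n+1)).castSucc) (Fin.last (n+2)))))))

def pfF {κ n : ℕ} (p nn T : Fin n) : CFml κ n :=
  (isFunF p).and (CFml.all (CFml.all (
    (opMemF ((Fin.last n).castSucc) (Fin.last (n+1)) (p.castSucc.castSucc)).imp
    ((CFml.mem ((Fin.last n).castSucc) (nn.castSucc.castSucc)).and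
     (CFml.mem (Fin.last (n+1)) (T.castSucc.castSucc))))))

def zPFF {κ n : ℕ} (z nn T : Fin n) : CFml κ n :=
  CFml.all ((CFml.mem (Fin.last n) z.castSucc).iff'
    (pfF (Fin.last n) nn.castSucc T.castSucc))

def singOPF {κ n : ℕ} (z nn t : Fin n) : CFml κ n :=
  CFml.all ((CFml.mem (Fin.last n) z.castSucc).iff'
    (vOPF (Fin.last n) nn.castSucc t.castSucc))

/-! ### characterizations -/

section CHAR
variable {M : ZFSet} {κ : ℕ} {Γ : Fin κ → Set ZFSet}

lemma sat_vSingF (hM : IsCTM M) {n : ℕ} {w a : Fin n} {v : Fin n → ZFSet}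
    (hw : v w ∈ M) (ha : v a ∈ M) :
    SatC M.toSet Γ (vSingF w a) v ↔ v w = {v a} := by
  rw [vSingF, satC_all]
  refine Iff.trans (forall₂_congr fun x hx => ?_) (relSing hM hw ha)
  rw [satC_iff, satC_mem, satC_eq]
  simp

lemma sat_vPairSetF (hM : IsCTM M) {n : ℕ} {w a b : Fin n} {v : Fin n → ZFSet}
    (hw : v w ∈ M) (ha : v a ∈ M) (hb : v b ∈ M) :
    SatC M.toSet Γ (vPairSetF w a b) v ↔ v w = {v a, v b} := by
  rw [vPairSetF, satC_all]
  refine Iff.trans (forall₂_congr fun x hx => ?_) (relPairSet hM hw ha hb)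
  rw [satC_iff, satC_mem, satC_or, satC_eq, satC_eq]
  simp

lemma sat_vOPF (hM : IsCTM M) {n : ℕ} {x a b : Fin n} {v : Fin n → ZFSet}
    (hx : v x ∈ M) (ha : v a ∈ M) (hb : v b ∈ M) :
    SatC M.toSet Γ (vOPF x a b) v ↔ v x = ZFSet.pair (v a) (v b) := by
  rw [vOPF, satC_all]
  refine Iff.trans (forall₂_congr fun y hy => ?_) (relOP hM hx ha hb)
  rw [satC_iff, satC_mem, satC_or,
    sat_vSingF hM (by simpa using hy) (by simpa using ha),
    sat_vPairSetF hM (by simpa using hy) (by simpa using ha) (by simpa using hb)]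
  simp

lemma sat_emptyF (hM : IsCTM M) {n : ℕ} {z : Fin n} {v : Fin n → ZFSet}
    (hz : v z ∈ M) :
    SatC M.toSet Γ (emptyF z) v ↔ v z = ∅ := by
  rw [emptyF, satC_all]
  refine Iff.trans (forall₂_congr fun x hx => ?_) (relEmpty hM hz)
  rw [satC_not, satC_mem]
  simp

lemma sat_vUnionF (hM : IsCTM M) {n : ℕ} {w p q : Fin n} {v : Fin n → ZFSet}
    (hw : v w ∈ M) (hp : v p ∈ M) (hq : v q ∈ M) :
    SatC M.toSet Γ (vUnionF w p q) v ↔ v w = v p ∪ v q := by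
  rw [vUnionF, satC_all]
  refine Iff.trans (forall₂_congr fun x hx => ?_) (relUnion hM hw hp hq)
  rw [satC_iff, satC_mem, satC_or, satC_mem, satC_mem]
  simp

lemma sat_opMemF (hM : IsCTM M) {n : ℕ} {a b p : Fin n} {v : Fin n → ZFSet}
    (ha : v a ∈ M) (hb : v b ∈ M) (hp : v p ∈ M) :
    SatC M.toSet Γ (opMemF a b p) v ↔ ZFSet.pair (v a) (v b) ∈ v p := by
  rw [opMemF, satC_ex]
  constructor
  · rintro ⟨x, hx, hsat⟩
    rw [satC_and, satC_mem] at hsat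
    have h1 := (sat_vOPF hM (by simpa using hx) (by simpa using ha) (by simpa using hb)).1 hsat.1
    simp only [Fin.snoc_last, Fin.snoc_castSucc] at h1 hsat
    rw [← h1]; exact hsat.2
  · intro h
    refine ⟨ZFSet.pair (v a) (v b), hM.memT h hp, ?_⟩
    rw [satC_and, satC_mem,
      sat_vOPF hM (by simpa using hM.memT h hp) (by simpa using ha) (by simpa using hb)]
    simp [h]

lemma sat_isFunF (hM : IsCTM M) {n : ℕ} {p : Fin n} {v : Fin n → ZFSet}
    (hp : v p ∈ M) :
    SatC M.toSet Γ (isFunF p) v ↔ isFuncZ (v p) := by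
  rw [isFunF, satC_and, isFuncZ]
  apply and_congr
  · rw [satC_all]
    constructor
    · intro h w hw
      have hwM : w ∈ M := hM.memT hw hp
      have h2 := h w hwM
      rw [satC_imp, satC_mem, satC_ex] at h2
      simp only [Fin.snoc_last, Fin.snoc_castSucc] at h2
      obtain ⟨aa, haM, h3⟩ := h2 hw
      rw [satC_ex] at h3
      obtain ⟨bb, hbM, h4⟩ := h3
      have h5 := (sat_vOPF hM (by simpa using hwM) (by simpa using haM)
        (by simpa using hbM)).1 h4
      simp only [Fin.snoc_last, Fin.snoc_castSucc] at h5
      exact ⟨aa, bb, h5⟩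
    · intro h w hwM
      rw [satC_imp, satC_mem, satC_ex]
      simp only [Fin.snoc_last, Fin.snoc_castSucc]
      intro hw
      obtain ⟨a, b, rfl⟩ := h w hw
      have haM : a ∈ M := mem_of_pair_mem_left hM hwM
      have hbM : b ∈ M := mem_of_pair_mem_right hM hwM
      refine ⟨a, haM, ?_⟩
      rw [satC_ex]
      refine ⟨b, hbM, ?_⟩
      rw [sat_vOPF hM (by simpa using hwM) (by simpa using haM) (by simpa using hbM)]
      simp
  · constructor
    · intro h a b b' hab hab'
      have habM : ZFSet.pair a b ∈ M := hM.memT hab hp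
      have hab'M : ZFSet.pair a b' ∈ M := hM.memT hab' hp
      have haM : a ∈ M := mem_of_pair_mem_left hM habM
      have hbM : b ∈ M := mem_of_pair_mem_right hM habM
      have hb'M : b' ∈ M := mem_of_pair_mem_right hM hab'M
      rw [satC_all] at h
      have h1 := h a haM
      rw [satC_all] at h1
      have h2 := h1 b hbM
      rw [satC_all] at h2
      have h3 := h2 b' hb'M
      rw [satC_imp, satC_and, satC_eq] at h3
      rw [sat_opMemF hM (v := Fin.snoc (Fin.snoc (Fin.snoc v a) b) b')
        (by simpa using haM) (by simpa using hbM) (by simpa using hp)] at h3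
      rw [sat_opMemF hM (v := Fin.snoc (Fin.snoc (Fin.snoc v a) b) b')
        (by simpa using haM) (by simpa using hb'M) (by simpa using hp)] at h3
      simp only [Fin.snoc_last, Fin.snoc_castSucc] at h3
      exact h3 ⟨hab, hab'⟩
    · intro h
      rw [satC_all]
      intro a haM
      rw [satC_all]
      intro b hbM
      rw [satC_all]
      intro b' hb'M
      rw [satC_imp, satC_and, satC_eq]
      rw [sat_opMemF hM (v := Fin.snoc (Fin.snoc (Fin.snoc v a) b) b')
        (by simpa using haM) (by simpa using hbM) (by simpa using hp)]
      rw [sat_opMemF hM (v := Fin.snoc (Fin.snoc (Fin.snoc v a) b) b')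
        (by simpa using haM) (by simpa using hb'M) (by simpa using hp)]
      simp only [Fin.snoc_last, Fin.snoc_castSucc]
      exact fun hh => h a b b' hh.1 hh.2

lemma sat_pfF (hM : IsCTM M) {n : ℕ} {p nn T : Fin n} {v : Fin n → ZFSet}
    (hp : v p ∈ M) (hn : v nn ∈ M) (hT : v T ∈ M) :
    SatC M.toSet Γ (pfF p nn T) v ↔ realPF (v nn) (v T) (v p) := by
  rw [pfF, satC_and, realPF, sat_isFunF hM hp]
  apply and_congr Iff.rfl
  constructor
  · intro h a c hac
    have hacM : ZFSet.pair a c ∈ M := hM.memT hac hp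
    have haM : a ∈ M := mem_of_pair_mem_left hM hacM
    have hcM : c ∈ M := mem_of_pair_mem_right hM hacM
    rw [satC_all] at h
    have h1 := h a haM
    rw [satC_all] at h1
    have h2 := h1 c hcM
    rw [satC_imp, satC_and, satC_mem, satC_mem] at h2
    rw [sat_opMemF hM (v := Fin.snoc (Fin.snoc v a) c)
      (by simpa using haM) (by simpa using hcM) (by simpa using hp)] at h2
    simp only [Fin.snoc_last, Fin.snoc_castSucc] at h2
    exact h2 hac
  · intro h
    rw [satC_all]
    intro a haM
    rw [satC_all]
    intro c hcM
    rw [satC_imp, satC_and, satC_mem, satC_mem]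
    rw [sat_opMemF hM (v := Fin.snoc (Fin.snoc v a) c)
      (by simpa using haM) (by simpa using hcM) (by simpa using hp)]
    simp only [Fin.snoc_last, Fin.snoc_castSucc]
    exact h a c

lemma sat_zPFF (hM : IsCTM M) {n : ℕ} {z nn T : Fin n} {v : Fin n → ZFSet}
    (hz : v z ∈ M) (hn : v nn ∈ M) (hT : v T ∈ M)
    (hcl : ∀ q : ZFSet, realPF (v nn) (v T) q → q ∈ M) :
    SatC M.toSet Γ (zPFF z nn T) v ↔ ∀ q : ZFSet, (q ∈ v z ↔ realPF (v nn) (v T) q) := by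
  rw [zPFF, satC_all]
  constructor
  · intro h q
    constructor
    · intro hq
      have hqM : q ∈ M := hM.memT hq hz
      have h1 := h q hqM
      rw [satC_iff, satC_mem,
        sat_pfF hM (by simpa using hqM) (by simpa using hn) (by simpa using hT)] at h1
      simp only [Fin.snoc_last, Fin.snoc_castSucc] at h1
      exact h1.1 hq
    · intro hq
      have hqM : q ∈ M := hcl q hq
      have h1 := h q hqM
      rw [satC_iff, satC_mem,
        sat_pfF hM (by simpa using hqM) (by simpa using hn) (by simpa using hT)] at h1
      simp only [Fin.snoc_last, Fin.snoc_castSucc] at h1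
      exact h1.2 hq
  · intro h q hqM
    rw [satC_iff, satC_mem,
      sat_pfF hM (by simpa using hqM) (by simpa using hn) (by simpa using hT)]
    simp only [Fin.snoc_last, Fin.snoc_castSucc]
    exact h q

lemma sat_singOPF (hM : IsCTM M) {n : ℕ} {z nn t : Fin n} {v : Fin n → ZFSet}
    (hz : v z ∈ M) (hn : v nn ∈ M) (ht : v t ∈ M) :
    SatC M.toSet Γ (singOPF z nn t) v ↔ v z = {ZFSet.pair (v nn) (v t)} := by
  rw [singOPF, satC_all]
  refine Iff.trans (forall₂_congr fun x hx => ?_) (relSing hM hz (hM.pairZ hn ht))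
  rw [satC_iff, satC_mem,
    sat_vOPF hM (by simpa using hx) (by simpa using hn) (by simpa using ht)]
  simp

end CHAR

/-! ### evaluation lemmas for snoc assignments -/

section EV
variable (y z x : ZFSet)

@[simp] lemma ev0_0 (a : Fin 0 → ZFSet) : (Fin.snoc (Fin.snoc a y) z : Fin 2 → ZFSet) 0 = y := by
  simp [Fin.snoc]
@[simp] lemma ev0_1 (a : Fin 0 → ZFSet) : (Fin.snoc (Fin.snoc a y) z : Fin 2 → ZFSet) 1 = z := by
  simp [Fin.snoc]
@[simp] lemma ev1_0 (a : Fin 1 → ZFSet) : (Fin.snoc (Fin.snoc a y) z : Fin 3 → ZFSet) 0 = a 0 := by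
  simp [Fin.snoc]
@[simp] lemma ev1_1 (a : Fin 1 → ZFSet) : (Fin.snoc (Fin.snoc a y) z : Fin 3 → ZFSet) 1 = y := by
  simp [Fin.snoc]
@[simp] lemma ev1_2 (a : Fin 1 → ZFSet) : (Fin.snoc (Fin.snoc a y) z : Fin 3 → ZFSet) 2 = z := by
  simp [Fin.snoc]
@[simp] lemma evs2_0 (a : Fin 2 → ZFSet) : (Fin.snoc a x : Fin 3 → ZFSet) 0 = a 0 := by
  simp [Fin.snoc]
@[simp] lemma evs2_1 (a : Fin 2 → ZFSet) : (Fin.snoc a x : Fin 3 → ZFSet) 1 = a 1 := by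
  simp [Fin.snoc]
@[simp] lemma evs2_2 (a : Fin 2 → ZFSet) : (Fin.snoc a x : Fin 3 → ZFSet) 2 = x := by
  simp [Fin.snoc]
@[simp] lemma eve_0 (a : Fin 0 → ZFSet) : (Fin.snoc a y : Fin 1 → ZFSet) 0 = y := by
  simp [Fin.snoc]
@[simp] lemma evg_0 (a : Fin 1 → ZFSet) : (Fin.snoc a y : Fin 2 → ZFSet) 0 = a 0 := by
  simp [Fin.snoc]
@[simp] lemma evg_1 (a : Fin 1 → ZFSet) : (Fin.snoc a y : Fin 2 → ZFSet) 1 = y := by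
  simp [Fin.snoc]
@[simp] lemma evh_0 (a : Fin 2 → ZFSet) (w : ZFSet) :
    (Fin.snoc (Fin.snoc (Fin.snoc a x) y) w : Fin 5 → ZFSet) 0 = a 0 := by simp [Fin.snoc]
@[simp] lemma evh_1 (a : Fin 2 → ZFSet) (w : ZFSet) :
    (Fin.snoc (Fin.snoc (Fin.snoc a x) y) w : Fin 5 → ZFSet) 1 = a 1 := by simp [Fin.snoc]
@[simp] lemma evd_0 (a : Fin 1 → ZFSet) (w : ZFSet) :
    (Fin.snoc (Fin.snoc (Fin.snoc a y) z) w : Fin 4 → ZFSet) 0 = a 0 := by simp [Fin.snoc]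
@[simp] lemma evd_1 (a : Fin 1 → ZFSet) (w : ZFSet) :
    (Fin.snoc (Fin.snoc (Fin.snoc a y) z) w : Fin 4 → ZFSet) 1 = y := by simp [Fin.snoc]
@[simp] lemma evd_2 (a : Fin 1 → ZFSet) (w : ZFSet) :
    (Fin.snoc (Fin.snoc (Fin.snoc a y) z) w : Fin 4 → ZFSet) 2 = z := by simp [Fin.snoc]
@[simp] lemma evd_3 (a : Fin 1 → ZFSet) (w : ZFSet) :
    (Fin.snoc (Fin.snoc (Fin.snoc a y) z) w : Fin 4 → ZFSet) 3 = w := by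
  simp only [Fin.snoc]; rw [dif_neg (by decide)]; simp
@[simp] lemma evf_0 (a : Fin 2 → ZFSet) (w : ZFSet) :
    (Fin.snoc (Fin.snoc a x) w : Fin 4 → ZFSet) 0 = a 0 := by simp [Fin.snoc]
@[simp] lemma evf_1 (a : Fin 2 → ZFSet) (w : ZFSet) :
    (Fin.snoc (Fin.snoc a x) w : Fin 4 → ZFSet) 1 = a 1 := by simp [Fin.snoc]
@[simp] lemma evf_2 (a : Fin 2 → ZFSet) (w : ZFSet) :
    (Fin.snoc (Fin.snoc a x) w : Fin 4 → ZFSet) 2 = x := by simp [Fin.snoc]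
@[simp] lemma evf_3 (a : Fin 2 → ZFSet) (w : ZFSet) :
    (Fin.snoc (Fin.snoc a x) w : Fin 4 → ZFSet) 3 = w := by
  simp only [Fin.snoc]; rw [dif_neg (by decide)]; simp

end EV

/-! ### construction of the value set T -/

lemma exists_T {M α : ZFSet} (hM : IsCTM M) (hα : IsOrdIn M α) :
    ∃ T : ZFSet, T ∈ M ∧ ∀ x : ZFSet, x ∈ T ↔
      (x ∈ α ∨ ∃ β : ZFSet, (β ∈ α ∨ β = α) ∧ x = geqSym β) := by
  obtain ⟨hαM, hαOrd⟩ := hα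
  set sα : ZFSet := insert α α with hsα
  have hsαM : sα ∈ M := hM.succM hαM
  have hmem_sα : ∀ β : ZFSet, β ∈ sα ↔ (β ∈ α ∨ β = α) := by
    intro β
    rw [hsα, ZFSet.mem_insert_iff]; tauto
  -- collection: for each y ∈ sα, geqSym y exists
  have hcol := hM.collection 0 (vOPF 1 0 0) (fun i => i.elim0) (fun i => i.elim0)
    sα hsαM ?_
  swap
  · intro y hy
    have hyM : y ∈ M := hM.memT hy hsαM
    refine ⟨geqSym y, hM.geqSymM hyM, ?_⟩
    rw [Sat, sat_vOPF hM (by simpa using hM.geqSymM hyM) (by simpa using hyM)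
      (by simpa using hyM)]
    simp [geqSym]
  obtain ⟨c, hcM, hc⟩ := hcol
  have hgeq_mem : ∀ y ∈ sα, geqSym y ∈ c := by
    intro y hy
    obtain ⟨z, hzc, hz⟩ := hc y hy
    rw [Sat, sat_vOPF hM (by simpa using hM.memT hzc hcM)
      (by simpa using hM.memT hy hsαM) (by simpa using hM.memT hy hsαM)] at hz
    simp only [ev0_0, ev0_1] at hz
    rw [geqSym, ← hz]; exact hzc
  -- separation over α ∪ c
  set u : ZFSet := α ∪ c with hu
  have huM : u ∈ M := hM.union2 hαM hcM
  set aa : Fin 2 → ZFSet := ![α, sα] with haa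
  have haaM : ∀ i, aa i ∈ M := by
    intro i; fin_cases i <;> simp [haa, hαM, hsαM]
  set φT : Fml 3 := (CFml.mem 2 0).or
    (CFml.ex ((CFml.mem (Fin.last 3) 1).and (vOPF 2 (Fin.last 3) (Fin.last 3)))) with hφT
  have hsep := hM.separation 2 φT aa haaM u huM
  refine ⟨_, hsep, ?_⟩
  intro x
  rw [ZFSet.mem_sep]
  have hsat : ∀ x : ZFSet, x ∈ M →
      (Sat M φT (Fin.snoc aa x) ↔ (x ∈ α ∨ ∃ β : ZFSet, (β ∈ α ∨ β = α) ∧ x = geqSym β)) := by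
    intro x hxM
    rw [hφT, Sat, satC_or, satC_mem, satC_ex]
    apply or_congr
    · simp [haa]
    · constructor
      · rintro ⟨β, hβM, hb⟩
        rw [satC_and, satC_mem,
          sat_vOPF hM (by simpa using hxM) (by simpa using hβM) (by simpa using hβM)] at hb
        simp only [Fin.snoc_last, Fin.snoc_castSucc, evs2_0, evs2_1, evs2_2] at hb
        refine ⟨β, ?_, ?_⟩
        · rw [← hmem_sα]; simpa [haa] using hb.1
        · simpa [geqSym] using hb.2
      · rintro ⟨β, hβ, rfl⟩
        have hβM : β ∈ M := hM.memT ((hmem_sα β).2 hβ) hsαM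
        refine ⟨β, hβM, ?_⟩
        rw [satC_and, satC_mem,
          sat_vOPF hM (by simpa using hM.geqSymM hβM) (by simpa using hβM)
            (by simpa using hβM)]
        simp only [Fin.snoc_last, Fin.snoc_castSucc, evs2_0, evs2_1, evs2_2]
        constructor
        · simpa [haa] using (hmem_sα β).2 hβ
        · simp [geqSym, haa]
    
  constructor
  · rintro ⟨hxu, hxsat⟩
    exact (hsat x (hM.memT hxu huM)).1 hxsat
  · intro h
    have hxu : x ∈ u := by
      rcases h with hx | ⟨β, hβ, rfl⟩
      · rw [hu, ZFSet.mem_union]; exact Or.inl hx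
      · rw [hu, ZFSet.mem_union]
        exact Or.inr (hgeq_mem β ((hmem_sα β).2 hβ))
    have hxM : x ∈ M := hM.memT hxu huM
    exact ⟨hxu, (hsat x hxM).2 h⟩

/-! ### union-image formulas -/

def isUnionMemF {κ n : ℕ} (w p G : Fin n) : CFml κ n :=
  CFml.ex ((CFml.mem (Fin.last n) G.castSucc).and
    (vUnionF w.castSucc p.castSucc (Fin.last n)))

section CHAR2
variable {M : ZFSet} {κ : ℕ} {Γ : Fin κ → Set ZFSet}

lemma sat_isUnionMemF (hM : IsCTM M) {n : ℕ} {w p G : Fin n} {v : Fin n → ZFSet}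
    (hw : v w ∈ M) (hp : v p ∈ M) (hG : v G ∈ M) :
    SatC M.toSet Γ (isUnionMemF w p G) v ↔ ∃ q ∈ v G, v w = v p ∪ q := by
  rw [isUnionMemF, satC_ex]
  constructor
  · rintro ⟨q, hqM, hq⟩
    rw [satC_and, satC_mem,
      sat_vUnionF hM (by simpa using hw) (by simpa using hp) (by simpa using hqM)] at hq
    simp only [Fin.snoc_last, Fin.snoc_castSucc] at hq
    exact ⟨q, hq.1, hq.2⟩
  · rintro ⟨q, hqG, hq⟩
    have hqM : q ∈ M := hM.memT hqG hG
    refine ⟨q, hqM, ?_⟩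
    rw [satC_and, satC_mem,
      sat_vUnionF hM (by simpa using hw) (by simpa using hp) (by simpa using hqM)]
    simp only [Fin.snoc_last, Fin.snoc_castSucc]
    exact ⟨hqG, hq⟩

end CHAR2

def unionImgF {κ n : ℕ} (G p z : Fin n) : CFml κ n :=
  CFml.all ((CFml.mem (Fin.last n) z.castSucc).iff'
    (isUnionMemF (Fin.last n) p.castSucc G.castSucc))

section CHAR3
variable {M : ZFSet} {κ : ℕ} {Γ : Fin κ → Set ZFSet}

lemma sat_unionImgF (hM : IsCTM M) {n : ℕ} {G p z : Fin n} {v : Fin n → ZFSet}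
    (hG : v G ∈ M) (hp : v p ∈ M) (hz : v z ∈ M) :
    SatC M.toSet Γ (unionImgF G p z) v ↔
      ∀ w : ZFSet, (w ∈ v z ↔ ∃ q ∈ v G, w = v p ∪ q) := by
  rw [unionImgF, satC_all]
  constructor
  · intro h w
    constructor
    · intro hw
      have hwM := hM.memT hw hz
      have h1 := h w hwM
      rw [satC_iff, satC_mem,
        sat_isUnionMemF hM (by simpa using hwM) (by simpa using hp) (by simpa using hG)] at h1
      simp only [Fin.snoc_last, Fin.snoc_castSucc] at h1
      exact h1.1 hw
    · rintro ⟨q, hqG, rfl⟩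
      have hwM : v p ∪ q ∈ M := hM.union2 hp (hM.memT hqG hG)
      have h1 := h _ hwM
      rw [satC_iff, satC_mem,
        sat_isUnionMemF hM (by simpa using hwM) (by simpa using hp) (by simpa using hG)] at h1
      simp only [Fin.snoc_last, Fin.snoc_castSucc] at h1
      exact h1.2 ⟨q, hqG, rfl⟩
  · intro h w hwM
    rw [satC_iff, satC_mem,
      sat_isUnionMemF hM (by simpa using hwM) (by simpa using hp) (by simpa using hG)]
    simp only [Fin.snoc_last, Fin.snoc_castSucc]
    exact h w

end CHAR3

lemma realPF_empty (n T : ZFSet) : realPF n T ∅ :=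
  ⟨⟨fun x hx => absurd hx (ZFSet.notMem_empty x),
    fun _ _ _ h _ => absurd h (ZFSet.notMem_empty _)⟩,
   fun _ _ h => absurd h (ZFSet.notMem_empty _)⟩

/-! ### the stages PF_k exist in M -/

lemma exists_PF {M T : ZFSet} (hM : IsCTM M) (hT : T ∈ M) :
    ∀ k : ℕ, ∃ z : ZFSet, z ∈ M ∧ ∀ p : ZFSet, p ∈ z ↔ realPF (natZ k) T p := by
  intro k
  induction k with
  | zero =>
    refine ⟨{∅}, hM.sing hM.empty_mem, ?_⟩
    intro p
    rw [ZFSet.mem_singleton]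
    constructor
    · rintro rfl; exact realPF_empty _ _
    · intro h
      rw [ZFSet.eq_empty]
      intro w hw
      obtain ⟨a, c, rfl⟩ := h.1.1 w hw
      have h2 := (h.2 a c hw).1
      rw [natZ_zero] at h2
      exact ZFSet.notMem_empty _ h2
  | succ k ih =>
    obtain ⟨zk, hzkM, hzk⟩ := ih
    have hnkM : natZ k ∈ M := hM.memT (natZ_mem_omega k) hM.infinity
    have hnk1M : natZ (k+1) ∈ M := hM.memT (natZ_mem_omega (k+1)) hM.infinity
    -- Step A: collect singletons {⟨natZ k, t⟩} for t ∈ T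
    obtain ⟨d, hdM, hd⟩ := hM.collection 1 (singOPF 2 0 1) ![natZ k]
      (by intro i; fin_cases i; simpa using hnkM) T hT (by
        intro t ht
        have htM := hM.memT ht hT
        refine ⟨{ZFSet.pair (natZ k) t}, hM.sing (hM.pairZ hnkM htM), ?_⟩
        rw [Sat, sat_singOPF hM (by simpa using hM.sing (hM.pairZ hnkM htM))
          (by simpa using hnkM) (by simpa using htM)]
        simp)
    set c2 : ZFSet := d ∪ {∅} with hc2
    have hc2M : c2 ∈ M := hM.union2 hdM (hM.sing hM.empty_mem)
    set aG : Fin 2 → ZFSet := ![natZ k, T] with haG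
    have haGM : ∀ i, aG i ∈ M := by intro i; fin_cases i <;> simp [haG, hnkM, hT]
    set φG : Fml 3 := (emptyF 2).or
      (CFml.ex ((CFml.mem (Fin.last 3) 1).and (singOPF 2 0 (Fin.last 3)))) with hφG
    have hsatG : ∀ q : ZFSet, q ∈ M → (Sat M φG (Fin.snoc aG q) ↔
        (q = ∅ ∨ ∃ t ∈ T, q = {ZFSet.pair (natZ k) t})) := by
      intro q hqM
      rw [hφG, Sat, satC_or, sat_emptyF hM (by simpa [haG] using hqM), satC_ex]
      apply or_congr
      · simp [haG]
      · constructor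
        · rintro ⟨t, htM, hsat⟩
          rw [satC_and, satC_mem, sat_singOPF hM (by simpa [haG] using hqM)
            (by simpa [haG] using hnkM) (by simpa using htM)] at hsat
          simp only [Fin.snoc_last, Fin.snoc_castSucc, evf_0, evf_1, evf_2, evf_3] at hsat
          exact ⟨t, by simpa [haG] using hsat.1, by simpa [haG] using hsat.2⟩
        · rintro ⟨t, htT, rfl⟩
          have htM := hM.memT htT hT
          refine ⟨t, htM, ?_⟩
          rw [satC_and, satC_mem, sat_singOPF hM
            (by simpa [haG] using hqM) (by simpa [haG] using hnkM) (by simpa using htM)]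
          simp only [Fin.snoc_last, Fin.snoc_castSucc, evf_0, evf_1, evf_2, evf_3]
          exact ⟨by simpa [haG] using htT, by simp [haG]⟩
    set G : ZFSet := ZFSet.sep (fun q => Sat M φG (Fin.snoc aG q)) c2 with hGdef
    have hGM : G ∈ M := hM.separation 2 φG aG haGM c2 hc2M
    have hGmem : ∀ q : ZFSet, q ∈ G ↔ (q = ∅ ∨ ∃ t ∈ T, q = {ZFSet.pair (natZ k) t}) := by
      intro q
      rw [hGdef, ZFSet.mem_sep]
      constructor
      · rintro ⟨hqc2, hsat⟩
        exact (hsatG q (hM.memT hqc2 hc2M)).1 hsat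
      · intro h
        have hqc2 : q ∈ c2 := by
          rcases h with rfl | ⟨t, htT, rfl⟩
          · rw [hc2, ZFSet.mem_union]
            exact Or.inr (ZFSet.mem_singleton.2 rfl)
          · rw [hc2, ZFSet.mem_union]
            left
            obtain ⟨z0, hz0d, hz0⟩ := hd t htT
            rw [Sat, sat_singOPF hM (by simpa using hM.memT hz0d hdM)
              (by simpa using hnkM) (by simpa using hM.memT htT hT)] at hz0
            simp at hz0
            rwa [← hz0]
        exact ⟨hqc2, (hsatG q (hM.memT hqc2 hc2M)).2 h⟩
    -- Step B: for p0 ∈ M, the set {p0 ∪ q : q ∈ G} is in M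
    have hzp : ∀ p0 : ZFSet, p0 ∈ M →
        ∃ zp : ZFSet, zp ∈ M ∧ ∀ w : ZFSet, (w ∈ zp ↔ ∃ q ∈ G, w = p0 ∪ q) := by
      intro p0 hp0M
      obtain ⟨e, heM, he⟩ := hM.collection 1 (vUnionF 2 0 1) ![p0]
        (by intro i; fin_cases i; simpa using hp0M) G hGM (by
          intro q hq
          have hqM := hM.memT hq hGM
          refine ⟨p0 ∪ q, hM.union2 hp0M hqM, ?_⟩
          rw [Sat, sat_vUnionF hM (by simpa using hM.union2 hp0M hqM)
            (by simpa using hp0M) (by simpa using hqM)]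
          simp)
      set aB : Fin 2 → ZFSet := ![p0, G] with haB
      set φB : Fml 3 := isUnionMemF 2 0 1 with hφB
      set zp := ZFSet.sep (fun w => Sat M φB (Fin.snoc aB w)) e with hzpdef
      have hsatB : ∀ w : ZFSet, w ∈ M →
          (Sat M φB (Fin.snoc aB w) ↔ ∃ q ∈ G, w = p0 ∪ q) := by
        intro w hwM
        rw [hφB, Sat, sat_isUnionMemF hM (by simpa [haB] using hwM)
          (by simpa [haB] using hp0M) (by simpa [haB] using hGM)]
        simp [haB]
      refine ⟨zp, hM.separation 2 φB aB
        (by intro i; fin_cases i <;> simp [haB, hp0M, hGM]) e heM, ?_⟩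
      intro w
      rw [hzpdef, ZFSet.mem_sep]
      constructor
      · rintro ⟨hwe, hsat⟩
        exact (hsatB w (hM.memT hwe heM)).1 hsat
      · rintro ⟨q, hqG, rfl⟩
        have hqM := hM.memT hqG hGM
        have hwe : p0 ∪ q ∈ e := by
          obtain ⟨w', hw'e, hw'⟩ := he q hqG
          rw [Sat, sat_vUnionF hM (by simpa using hM.memT hw'e heM)
            (by simpa using hp0M) (by simpa using hqM)] at hw'
          simp at hw'
          rwa [← hw']
        exact ⟨hwe, (hsatB _ (hM.memT hwe heM)).2 ⟨q, hqG, rfl⟩⟩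
    -- Step C: outer collection over zk
    obtain ⟨b2, hb2M, hb2⟩ := hM.collection 1 (unionImgF 0 1 2) ![G]
      (by intro i; fin_cases i; simpa using hGM) zk hzkM (by
        intro p0 hp0
        have hp0M := hM.memT hp0 hzkM
        obtain ⟨zp, hzpM, hzpc⟩ := hzp p0 hp0M
        refine ⟨zp, hzpM, ?_⟩
        rw [Sat, sat_unionImgF hM (by simpa using hGM) (by simpa using hp0M)
          (by simpa using hzpM)]
        simpa using hzpc)
    have hUM : (⋃₀ b2 : ZFSet) ∈ M := hM.union _ hb2M
    set aC : Fin 2 → ZFSet := ![natZ (k+1), T] with haC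
    set φC : Fml 3 := pfF 2 0 1 with hφC
    set zk1 := ZFSet.sep (fun p => Sat M φC (Fin.snoc aC p)) (⋃₀ b2) with hzk1def
    have hsatC : ∀ p : ZFSet, p ∈ M →
        (Sat M φC (Fin.snoc aC p) ↔ realPF (natZ (k+1)) T p) := by
      intro p hpM
      rw [hφC, Sat, sat_pfF hM (by simpa [haC] using hpM)
        (by simpa [haC] using hnk1M) (by simpa [haC] using hT)]
      simp [haC]
    refine ⟨zk1, hM.separation 2 φC aC
      (by intro i; fin_cases i <;> simp [haC, hnk1M, hT]) _ hUM, ?_⟩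
    intro p
    rw [hzk1def, ZFSet.mem_sep]
    constructor
    · rintro ⟨hpU, hsat⟩
      exact (hsatC p (hM.memT hpU hUM)).1 hsat
    · intro hpf
      have hpM : p ∈ M := realPF_memM hM hpf hnk1M hT
        (realPF_finite hpf (natZ_toSet_finite (k+1)))
      refine ⟨?_, (hsatC p hpM).2 hpf⟩
      set p0 := ZFSet.sep (fun w => ∀ a c : ZFSet, w = ZFSet.pair a c → a ∈ natZ k) p
        with hp0def
      set q := ZFSet.sep (fun w => ¬ ∀ a c : ZFSet, w = ZFSet.pair a c → a ∈ natZ k) p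
        with hqdef
      have hp0real : realPF (natZ k) T p0 := by
        refine ⟨⟨?_, ?_⟩, ?_⟩
        · intro x hx; exact hpf.1.1 x (ZFSet.mem_sep.1 hx).1
        · intro a b b' h1 h2
          exact hpf.1.2 a b b' (ZFSet.mem_sep.1 h1).1 (ZFSet.mem_sep.1 h2).1
        · intro a c hac
          obtain ⟨hacp, hPac⟩ := ZFSet.mem_sep.1 hac
          exact ⟨hPac a c rfl, (hpf.2 a c hacp).2⟩
      have hqG : q ∈ G := by
        rw [hGmem]
        by_cases hqe : q = ∅
        · exact Or.inl hqe
        · right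
          have hne : ∃ w, w ∈ q := by
            by_contra hcon
            push_neg at hcon
            exact hqe (ZFSet.eq_empty q |>.2 hcon)
          obtain ⟨w0, hw0⟩ := hne
          obtain ⟨hw0p, hw0P⟩ := ZFSet.mem_sep.1 hw0
          obtain ⟨a, c, rfl⟩ := hpf.1.1 w0 hw0p
          have ha' : a ∉ natZ k := fun hmem =>
            hw0P (fun a' c' he => by
              obtain ⟨h1, _⟩ := ZFSet.pair_inj.1 he
              rwa [← h1])
          have haeq : a = natZ k := by
            rcases mem_natZ_succ.1 (hpf.2 a c hw0p).1 with h | h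
            · exact h
            · exact absurd h ha'
          subst haeq
          refine ⟨c, (hpf.2 _ _ hw0p).2, ?_⟩
          apply ZFSet.ext
          intro w
          rw [ZFSet.mem_singleton]
          constructor
          · intro hwq
            obtain ⟨hwp, hwP⟩ := ZFSet.mem_sep.1 hwq
            obtain ⟨a2, c2, rfl⟩ := hpf.1.1 w hwp
            have ha2' : a2 ∉ natZ k := fun hmem =>
              hwP (fun a' c' he => by
                obtain ⟨h1, _⟩ := ZFSet.pair_inj.1 he
                rwa [← h1])
            have ha2eq : a2 = natZ k := by
              rcases mem_natZ_succ.1 (hpf.2 a2 c2 hwp).1 with h | h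
              · exact h
              · exact absurd h ha2'
            subst ha2eq
            rw [hpf.1.2 (natZ k) c2 c hwp hw0p]
          · rintro rfl
            exact hw0
      have hpsplit : p = p0 ∪ q := by
        apply ZFSet.ext
        intro w
        rw [ZFSet.mem_union, hp0def, hqdef, ZFSet.mem_sep, ZFSet.mem_sep]
        by_cases hPw : ∀ a c : ZFSet, w = ZFSet.pair a c → a ∈ natZ k <;> tauto
      have hp0zk : p0 ∈ zk := (hzk p0).2 hp0real
      obtain ⟨z, hzb2, hzsat⟩ := hb2 p0 hp0zk
      rw [Sat, sat_unionImgF hM (by simpa using hGM)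
        (by simpa using hM.memT hp0zk hzkM) (by simpa using hM.memT hzb2 hb2M)] at hzsat
      simp only [ev1_0, ev1_1, ev1_2] at hzsat
      rw [ZFSet.mem_sUnion]
      refine ⟨z, hzb2, ?_⟩
      rw [hzsat p]
      exact ⟨q, hqG, hpsplit⟩

/-! ### the coded suborder Col(ω, ≤α) is in M -/

lemma exists_code_bdd {M α : ZFSet} (hM : IsCTM M) (hα : IsOrdIn M α) :
    ∃ s : ZFSet, s ∈ M ∧ s.toSet = ColGeqBddP α := by
  obtain ⟨T, hTM, hTmem⟩ := exists_T hM hα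
  obtain ⟨b, hbM, hb⟩ := hM.collection 1 (zPFF 2 1 0) ![T]
    (by intro i; fin_cases i; simpa using hTM) ZFSet.omega hM.infinity (by
      intro y hy
      obtain ⟨k, rfl⟩ := mem_omega_iff.1 hy
      have hyM : natZ k ∈ M := hM.memT hy hM.infinity
      obtain ⟨zk, hzkM, hzk⟩ := exists_PF hM hTM k
      refine ⟨zk, hzkM, ?_⟩
      rw [Sat, sat_zPFF hM (by simpa using hzkM) (by simpa using hyM) (by simpa using hTM)
        (by intro q hq; simp only [ev1_0, ev1_1] at hq
            simp only [Matrix.cons_val_zero] at hq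
            exact realPF_memM hM hq hyM hTM (realPF_finite hq (natZ_toSet_finite k)))]
      simpa using hzk)
  set φB : Fml 3 := CFml.ex ((CFml.mem (Fin.last 3) 0).and (zPFF 2 (Fin.last 3) 1)) with hφB
  have hsatB : ∀ z : ZFSet, z ∈ M → (Sat M φB (Fin.snoc ![ZFSet.omega, T] z) ↔
      ∃ n : ZFSet, n ∈ ZFSet.omega ∧ ∀ p : ZFSet, (p ∈ z ↔ realPF n T p)) := by
    intro z hzM
    have hclgen : ∀ n : ZFSet, n ∈ ZFSet.omega → ∀ q : ZFSet, realPF n T q → q ∈ M := by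
      intro n hn q hq
      obtain ⟨k, rfl⟩ := mem_omega_iff.1 hn
      exact realPF_memM hM hq (hM.memT hn hM.infinity) hTM
        (realPF_finite hq (natZ_toSet_finite k))
    rw [hφB, Sat, satC_ex]
    constructor
    · rintro ⟨n, hnM, hsat⟩
      rw [satC_and, satC_mem] at hsat
      obtain ⟨h1, h2⟩ := hsat
      simp only [Fin.snoc_last, Fin.snoc_castSucc, evf_0, evf_1, evf_2, evf_3,
        Matrix.cons_val_zero, Matrix.cons_val_one, Matrix.head_cons] at h1
      rw [sat_zPFF hM (by simpa using hzM) (by simpa using hnM) (by simpa using hTM)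
        (by intro q hq; simp only [Fin.snoc_last, Fin.snoc_castSucc, evf_0, evf_1, evf_2,
              evf_3, Matrix.cons_val_zero, Matrix.cons_val_one, Matrix.head_cons] at hq
            exact hclgen n h1 q hq)] at h2
      simp only [Fin.snoc_last, Fin.snoc_castSucc, evf_0, evf_1, evf_2, evf_3,
        Matrix.cons_val_zero, Matrix.cons_val_one, Matrix.head_cons] at h2
      exact ⟨n, h1, h2⟩
    · rintro ⟨n, hnω, hchar⟩
      have hnM := hM.memT hnω hM.infinity
      refine ⟨n, hnM, ?_⟩
      rw [satC_and, satC_mem]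
      constructor
      · simp only [Fin.snoc_last, Fin.snoc_castSucc, evf_0, evf_1, evf_2, evf_3,
          Matrix.cons_val_zero]
        exact hnω
      · rw [sat_zPFF hM (by simpa using hzM) (by simpa using hnM) (by simpa using hTM)
          (by intro q hq; simp only [Fin.snoc_last, Fin.snoc_castSucc, evf_0, evf_1, evf_2,
                evf_3, Matrix.cons_val_zero, Matrix.cons_val_one, Matrix.head_cons] at hq
              exact hclgen n hnω q hq)]
        simp only [Fin.snoc_last, Fin.snoc_castSucc, evf_0, evf_1, evf_2, evf_3,
          Matrix.cons_val_zero, Matrix.cons_val_one, Matrix.head_cons]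
        exact hchar
  set B := ZFSet.sep (fun z => Sat M φB (Fin.snoc ![ZFSet.omega, T] z)) b with hBdef
  have hBM : B ∈ M := hM.separation 2 φB ![ZFSet.omega, T]
    (by intro i; fin_cases i <;> simp [hM.infinity, hTM]) b hbM
  refine ⟨⋃₀ B, hM.union _ hBM, ?_⟩
  apply Set.ext
  intro p
  rw [ZFSet.mem_toSet]
  constructor
  · intro hp
    obtain ⟨z, hzB, hpz⟩ := ZFSet.mem_sUnion.1 hp
    rw [hBdef, ZFSet.mem_sep] at hzB
    obtain ⟨hzb, hsat⟩ := hzB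
    obtain ⟨n, hnω, hchar⟩ := (hsatB z (hM.memT hzb hbM)).1 hsat
    have hpf : realPF n T p := (hchar p).1 hpz
    obtain ⟨k, rfl⟩ := mem_omega_iff.1 hnω
    refine ⟨hpf.1, realPF_finite hpf (natZ_toSet_finite k), ?_, ?_⟩
    · rintro a ⟨c, hac⟩
      exact natZ_subset_omega k a (hpf.2 a c hac).1
    · rintro c ⟨a, hac⟩
      exact (hTmem c).1 ((hpf.2 a c hac).2)
  · rintro ⟨hfun, hfin, hdom, hran⟩
    obtain ⟨k, hk⟩ := bounded_of_finite (domZ_finite hfun hfin) hdom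
    have hpf : realPF (natZ k) T p :=
      ⟨hfun, fun a c hac => ⟨hk a ⟨c, hac⟩, (hTmem c).2 (hran c ⟨a, hac⟩)⟩⟩
    obtain ⟨z, hzb, hzsat⟩ := hb (natZ k) (natZ_mem_omega k)
    have hnM : natZ k ∈ M := hM.memT (natZ_mem_omega k) hM.infinity
    rw [Sat, sat_zPFF hM (by simpa using hM.memT hzb hbM) (by simpa using hnM)
      (by simpa using hTM)
      (by intro q hq; simp only [ev1_0, ev1_1, Matrix.cons_val_zero] at hq
          exact realPF_memM hM hq hnM hTM (realPF_finite hq (natZ_toSet_finite k)))] at hzsat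
    simp only [ev1_0, ev1_1, ev1_2, Matrix.cons_val_zero] at hzsat
    apply ZFSet.mem_sUnion.2
    refine ⟨z, ?_, (hzsat p).2 hpf⟩
    rw [hBdef, ZFSet.mem_sep]
    exact ⟨hzb, (hsatB z (hM.memT hzb hbM)).2 ⟨natZ k, natZ_mem_omega k, hzsat⟩⟩

/-! ### ordinal / geqSym helper lemmas -/

lemma geqSym_inj {γ γ' : ZFSet} (h : geqSym γ = geqSym γ') : γ = γ' :=
  (ZFSet.pair_inj.1 h).1

lemma IsOrdZ.ne_geqSym {b γ : ZFSet} (hb : IsOrdZ b) (h : b = geqSym γ) : False := by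
  subst h
  have h1 : ({γ} : ZFSet) ∈ geqSym γ := mem_pairZ_iff.2 (Or.inl rfl)
  have h2 : γ ∈ geqSym γ := hb.1 _ h1 (ZFSet.mem_singleton.2 rfl)
  have h4 : γ ∈ ({γ} : ZFSet) := ZFSet.mem_singleton.2 rfl
  rcases mem_pairZ_iff.1 h2 with h3 | h3
  · rw [← h3] at h4
    exact ZFSet.mem_irrefl γ h4
  · rw [ZFSet.pair_eq_singleton] at h3
    rw [← h3] at h4
    exact ZFSet.mem_irrefl γ h4

lemma ord_ge_of_not_lt {α c : ZFSet} (hα : IsOrdZ α) (hc : IsOrdZ c) (h : c ∉ α) :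
    α = c ∨ α ∈ c := by
  rcases ordTrichotomy α hα c hc with h1 | h1 | h1
  · exact Or.inr h1
  · exact Or.inl h1
  · exact absurd h1 h

/-! ### snd of coded pairs, range finiteness -/

noncomputable def sndZ (w : ZFSet) : ZFSet :=
  if h : ∃ a b : ZFSet, w = ZFSet.pair a b then h.choose_spec.choose else ∅

lemma sndZ_pair (a b : ZFSet) : sndZ (ZFSet.pair a b) = b := by
  have h : ∃ a' b' : ZFSet, ZFSet.pair a b = ZFSet.pair a' b' := ⟨a, b, rfl⟩
  rw [sndZ, dif_pos h]
  exact ((ZFSet.pair_inj.1 h.choose_spec.choose_spec).2).symm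

lemma ranZ_finite {p : ZFSet} (hfun : isFuncZ p) (hfin : p.toSet.Finite) :
    (ranZ p).Finite := by
  apply (hfin.image sndZ).subset
  rintro c ⟨a, hac⟩
  exact ⟨ZFSet.pair a c, hac, sndZ_pair a c⟩

/-! ### conjunct 1: bounding -/

lemma exists_bound {M : ZFSet} (hM : IsCTM M) {s : Set ZFSet} (hfin : s.Finite)
    (hcond : ∀ b ∈ s, IsOrdIn M b ∨ ∃ γ : ZFSet, IsOrdIn M γ ∧ b = geqSym γ) :
    ∃ α : ZFSet, IsOrdIn M α ∧
      ∀ b ∈ s, (b ∈ α ∨ ∃ γ : ZFSet, γ ∈ α ∧ b = geqSym γ) := by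
  refine Set.Finite.induction_on
    (motive := fun s _ => (∀ b ∈ s, IsOrdIn M b ∨ ∃ γ : ZFSet, IsOrdIn M γ ∧ b = geqSym γ) →
      ∃ α : ZFSet, IsOrdIn M α ∧
        ∀ b ∈ s, (b ∈ α ∨ ∃ γ : ZFSet, γ ∈ α ∧ b = geqSym γ))
    _ hfin (fun _ => ⟨∅, ⟨hM.empty_mem, IsOrdZ.empty⟩, by simp⟩) ?_ hcond
  rintro b s _ _ ih hcond'
  obtain ⟨α₀, hα₀, hbnd⟩ := ih (fun x hx => hcond' x (Set.mem_insert_of_mem b hx))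
  have hext : ∀ δ : ZFSet, IsOrdIn M δ →
      ∃ α : ZFSet, IsOrdIn M α ∧ δ ∈ α ∧ ∀ x, x ∈ α₀ → x ∈ α := by
    intro δ hδ
    refine ⟨α₀ ∪ insert δ δ, ⟨hM.union2 hα₀.1 (hM.succM hδ.1), hα₀.2.union hδ.2.succ⟩, ?_, ?_⟩
    · exact ZFSet.mem_union.2 (Or.inr (ZFSet.mem_insert δ δ))
    · exact fun x hx => ZFSet.mem_union.2 (Or.inl hx)
  rcases hcond' b (Set.mem_insert b s) with hb | ⟨γ, hγ, hbeq⟩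
  · obtain ⟨α, hα, hbα, hmono⟩ := hext b hb
    refine ⟨α, hα, ?_⟩
    rintro x (rfl | hx)
    · exact Or.inl hbα
    · rcases hbnd x hx with h | ⟨γ', hγ', rfl⟩
      · exact Or.inl (hmono x h)
      · exact Or.inr ⟨γ', hmono γ' hγ', rfl⟩
  · obtain ⟨α, hα, hγα, hmono⟩ := hext γ hγ
    refine ⟨α, hα, ?_⟩
    rintro x (rfl | hx)
    · exact Or.inr ⟨γ, hγα, hbeq⟩
    · rcases hbnd x hx with h | ⟨γ', hγ', rfl⟩
      · exact Or.inl (hmono x h)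
      · exact Or.inr ⟨γ', hmono γ' hγ', rfl⟩

lemma conj1 {M : ZFSet} (hM : IsCTM M) (p : ZFSet) :
    p ∈ ColGeqP M ↔ ∃ α : ZFSet, IsOrdIn M α ∧ p ∈ ColGeqBddP α := by
  constructor
  · rintro ⟨hfun, hfin, hdom, hran⟩
    obtain ⟨α, hα, hbnd⟩ := exists_bound hM (ranZ_finite hfun hfin) hran
    refine ⟨α, hα, hfun, hfin, hdom, ?_⟩
    intro b hb
    rcases hbnd b hb with h | ⟨γ, hγ, rfl⟩
    · exact Or.inl h
    · exact Or.inr ⟨γ, Or.inl hγ, rfl⟩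
  · rintro ⟨α, hα, hfun, hfin, hdom, hran⟩
    refine ⟨hfun, hfin, hdom, ?_⟩
    intro b hb
    rcases hran b hb with h | ⟨β, hβ, rfl⟩
    · exact Or.inl ⟨hM.memT h hα.1, hα.2.mem h⟩
    · refine Or.inr ⟨β, ⟨?_, ?_⟩, rfl⟩
      · rcases hβ with h | rfl
        · exact hM.memT h hα.1
        · exact hα.1
      · rcases hβ with h | rfl
        · exact hα.2.mem h
        · exact hα.2

lemma conj3 {α α' : ZFSet} (hα : IsOrdZ α) (hα' : IsOrdZ α') (hαα' : α ∈ α') :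
    ColGeqBddP α ⊆ ColGeqBddP α' := by
  rintro p ⟨hfun, hfin, hdom, hran⟩
  refine ⟨hfun, hfin, hdom, ?_⟩
  intro b hb
  rcases hran b hb with h | ⟨β, hβ, rfl⟩
  · exact Or.inl (hα'.1.mem_trans h hαα')
  · refine Or.inr ⟨β, Or.inl ?_, rfl⟩
    rcases hβ with h | rfl
    · exact hα'.1.mem_trans h hαα'
    · exact hαα'

/-! ### transitivity of the ordering -/

lemma colGeqLe_trans {M s r q : ZFSet} (hsr : ColGeqLe M s r) (hrq : ColGeqLe M r q) :
    ColGeqLe M s q := by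
  refine ⟨fun a ha => hsr.1 a (hrq.1 a ha), ?_⟩
  intro n v hnv
  rcases hrq.2 n v hnv with h | ⟨α₀, hα₀, rfl, β, hβ, hle, hcase⟩
  · exact hsr.2 n v h
  · rcases hcase with h | h
    · rcases hsr.2 n β h with h' | ⟨α₁, _, hβeq, _⟩
      · exact Or.inr ⟨α₀, hα₀, rfl, β, hβ, hle, Or.inl h'⟩
      · exact absurd hβeq (fun he => hβ.2.ne_geqSym he)
    · rcases hsr.2 n (geqSym β) h with h' | ⟨α₁, _, hβeq, β₁, hβ₁, hle₁, hcase₁⟩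
      · exact Or.inr ⟨α₀, hα₀, rfl, β, hβ, hle, Or.inr h'⟩
      · have hβα₁ : β = α₁ := geqSym_inj hβeq
        subst hβα₁
        have hle₂ : α₀ = β₁ ∨ α₀ ∈ β₁ := by
          rcases hle with rfl | h1
          · exact hle₁
          · rcases hle₁ with rfl | h2
            · exact Or.inr h1
            · exact Or.inr (hβ₁.2.1.mem_trans h1 h2)
        exact Or.inr ⟨α₀, hα₀, rfl, β₁, hβ₁, hle₂, hcase₁⟩

/-! ### conjunct 4: complete subforcing -/

lemma complete_sub {M α : ZFSet} (hM : IsCTM M) (hα : IsOrdIn M α) (A : Set ZFSet)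
    (hmax : ∀ p ∈ ColGeqBddP α, ∃ q ∈ A, ∃ r ∈ ColGeqBddP α,
      ColGeqLe M r p ∧ ColGeqLe M r q) :
    ∀ p ∈ ColGeqP M, ∃ q ∈ A, ∃ r ∈ ColGeqP M, ColGeqLe M r p ∧ ColGeqLe M r q := by
  intro p hp
  classical
  set small : ZFSet → Prop :=
    fun c => c ∈ α ∨ ∃ β : ZFSet, (β ∈ α ∨ β = α) ∧ c = geqSym β with hsmall
  -- analysis of a non-small value of p
  have hbigval : ∀ c : ZFSet,
      (IsOrdIn M c ∨ ∃ γ : ZFSet, IsOrdIn M γ ∧ c = geqSym γ) → ¬ small c →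
      ((IsOrdIn M c ∧ (α = c ∨ α ∈ c)) ∨
        ∃ γ : ZFSet, IsOrdIn M γ ∧ c = geqSym γ ∧ α ∈ γ) := by
    intro c hc hns
    rcases hc with hc | ⟨γ, hγ, rfl⟩
    · refine Or.inl ⟨hc, ord_ge_of_not_lt hα.2 hc.2 ?_⟩
      intro hmem
      exact hns (Or.inl hmem)
    · refine Or.inr ⟨γ, hγ, rfl, ?_⟩
      rcases ordTrichotomy γ hγ.2 α hα.2 with h | h | h
      · exact absurd (Or.inr ⟨γ, Or.inl h, rfl⟩) hns
      · exact absurd (Or.inr ⟨γ, Or.inr h, rfl⟩) hns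
      · exact h
  -- the projection π of p to the bounded forcing
  set g : ZFSet → ZFSet :=
    fun w => if small (sndZ w) then w else ZFSet.pair (fstZ w) (geqSym α) with hg
  obtain ⟨π, hπ⟩ := exists_code_finite (hp.2.1.image g)
  have hπmem : ∀ w' : ZFSet, w' ∈ π ↔ ∃ w, w ∈ p ∧ g w = w' := by
    intro w'
    rw [← ZFSet.mem_toSet, hπ]
    exact Iff.rfl
  have hg1 : ∀ {n c : ZFSet}, small c → g (ZFSet.pair n c) = ZFSet.pair n c := by
    intro n c h
    rw [hg]
    simp only [sndZ_pair]
    rw [if_pos h]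
  have hg2 : ∀ {n c : ZFSet}, ¬ small c →
      g (ZFSet.pair n c) = ZFSet.pair n (geqSym α) := by
    intro n c h
    rw [hg]
    simp only [sndZ_pair, fstZ_pair]
    rw [if_neg h]
  have hπpair : ∀ {n v : ZFSet}, ZFSet.pair n v ∈ π ↔
      ∃ c : ZFSet, ZFSet.pair n c ∈ p ∧
        ((small c ∧ v = c) ∨ (¬ small c ∧ v = geqSym α)) := by
    intro n v
    rw [hπmem]
    constructor
    · rintro ⟨w, hw, hgw⟩
      obtain ⟨a, c, rfl⟩ := hp.1.1 w hw
      by_cases hc : small c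
      · rw [hg1 hc] at hgw
        obtain ⟨rfl, rfl⟩ := ZFSet.pair_inj.1 hgw
        exact ⟨c, hw, Or.inl ⟨hc, rfl⟩⟩
      · rw [hg2 hc] at hgw
        obtain ⟨rfl, rfl⟩ := ZFSet.pair_inj.1 hgw
        exact ⟨c, hw, Or.inr ⟨hc, rfl⟩⟩
    · rintro ⟨c, hc, hcase⟩
      rcases hcase with ⟨hsc, rfl⟩ | ⟨hsc, rfl⟩
      · exact ⟨ZFSet.pair n v, hc, hg1 hsc⟩
      · exact ⟨ZFSet.pair n c, hc, hg2 hsc⟩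
  -- domain of π is the domain of p
  have hπdom : ∀ n : ZFSet, n ∈ domZ π ↔ n ∈ domZ p := by
    intro n
    constructor
    · rintro ⟨v, hv⟩
      obtain ⟨c, hc, _⟩ := hπpair.1 hv
      exact ⟨c, hc⟩
    · rintro ⟨c, hc⟩
      by_cases hsc : small c
      · exact ⟨c, hπpair.2 ⟨c, hc, Or.inl ⟨hsc, rfl⟩⟩⟩
      · exact ⟨geqSym α, hπpair.2 ⟨c, hc, Or.inr ⟨hsc, rfl⟩⟩⟩
  -- π is in the bounded forcing
  have hπfun : isFuncZ π := by
    constructor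
    · intro w hw
      obtain ⟨w', hw', hgw⟩ := (hπmem w).1 hw
      obtain ⟨a, c, rfl⟩ := hp.1.1 w' hw'
      by_cases hc : small c
      · rw [hg1 hc] at hgw; exact ⟨a, c, hgw.symm⟩
      · rw [hg2 hc] at hgw; exact ⟨a, geqSym α, hgw.symm⟩
    · intro n v v' h1 h2
      obtain ⟨c, hc, hcase⟩ := hπpair.1 h1
      obtain ⟨c', hc', hcase'⟩ := hπpair.1 h2
      have hcc : c = c' := hp.1.2 n c c' hc hc'
      subst hcc
      rcases hcase with ⟨hsc, rfl⟩ | ⟨hsc, rfl⟩ <;>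
        rcases hcase' with ⟨hsc', rfl⟩ | ⟨hsc', rfl⟩ <;> first | rfl | exact absurd hsc' hsc | exact absurd hsc hsc'
  have hπBdd : π ∈ ColGeqBddP α := by
    refine ⟨hπfun, ?_, ?_, ?_⟩
    · rw [hπ]; exact hp.2.1.image g
    · rintro n ⟨v, hv⟩
      obtain ⟨c, hc, _⟩ := hπpair.1 hv
      exact hp.2.2.1 n ⟨c, hc⟩
    · rintro v ⟨n, hv⟩
      obtain ⟨c, hc, hcase⟩ := hπpair.1 hv
      rcases hcase with ⟨hsc, rfl⟩ | ⟨_, rfl⟩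
      · exact hsc
      · exact Or.inr ⟨α, Or.inr rfl, rfl⟩
  -- p extends π
  have hpπ : ColGeqLe M p π := by
    constructor
    · intro n hn
      exact (hπdom n).1 hn
    · intro n v hv
      obtain ⟨c, hc, hcase⟩ := hπpair.1 hv
      rcases hcase with ⟨_, rfl⟩ | ⟨hsc, rfl⟩
      · exact Or.inl hc
      · rcases hbigval c (hp.2.2.2 c ⟨n, hc⟩) hsc with ⟨hcord, hcge⟩ | ⟨γ, hγ, rfl, hγge⟩
        · exact Or.inr ⟨α, hα, rfl, c, hcord, hcge, Or.inl hc⟩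
        · exact Or.inr ⟨α, hα, rfl, γ, hγ, Or.inr hγge, Or.inr hc⟩
  -- get the antichain element below π
  obtain ⟨q, hqA, r, hrBdd, hrπ, hrq⟩ := hmax π hπBdd
  -- amalgamate r and p
  set s : ZFSet :=
    ZFSet.sep (fun w => ∀ c : ZFSet, ZFSet.pair (fstZ w) c ∈ p → small c) r ∪
    ZFSet.sep (fun w => ¬ ∀ a c : ZFSet, w = ZFSet.pair a c → small c) p with hs
  have hsmem : ∀ w : ZFSet, w ∈ s ↔
      ((w ∈ r ∧ ∀ c : ZFSet, ZFSet.pair (fstZ w) c ∈ p → small c) ∨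
       (w ∈ p ∧ ¬ ∀ a c : ZFSet, w = ZFSet.pair a c → small c)) := by
    intro w
    rw [hs, ZFSet.mem_union, ZFSet.mem_sep, ZFSet.mem_sep]
  -- membership in s at a pair
  have hspair1 : ∀ {n v : ZFSet}, ZFSet.pair n v ∈ r →
      (∀ c : ZFSet, ZFSet.pair n c ∈ p → small c) → ZFSet.pair n v ∈ s := by
    intro n v h1 h2
    rw [hsmem]
    left
    refine ⟨h1, ?_⟩
    rw [fstZ_pair]
    exact h2
  have hspair2 : ∀ {n c : ZFSet}, ZFSet.pair n c ∈ p → ¬ small c → ZFSet.pair n c ∈ s := by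
    intro n c h1 h2
    rw [hsmem]
    right
    refine ⟨h1, ?_⟩
    intro hall
    exact h2 (hall n c rfl)
  -- every member of s is a pair coming from r (with small p-values at its index) or big p
  have hselim : ∀ {n v : ZFSet}, ZFSet.pair n v ∈ s →
      ((ZFSet.pair n v ∈ r ∧ ∀ c : ZFSet, ZFSet.pair n c ∈ p → small c) ∨
       (ZFSet.pair n v ∈ p ∧ ¬ small v)) := by
    intro n v h
    rcases (hsmem _).1 h with ⟨h1, h2⟩ | ⟨h1, h2⟩
    · rw [fstZ_pair] at h2
      exact Or.inl ⟨h1, h2⟩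
    · refine Or.inr ⟨h1, ?_⟩
      intro hsv
      apply h2
      intro a c he
      obtain ⟨rfl, rfl⟩ := ZFSet.pair_inj.1 he
      exact hsv
  -- if p has a big value c at n then r's value at n is geqSym α
  have hrval : ∀ {n c v : ZFSet}, ZFSet.pair n c ∈ p → ¬ small c →
      ZFSet.pair n v ∈ r → v = geqSym α := by
    intro n c v hc hnc hv
    have hπα : ZFSet.pair n (geqSym α) ∈ π := hπpair.2 ⟨c, hc, Or.inr ⟨hnc, rfl⟩⟩
    rcases hrπ.2 n (geqSym α) hπα with h | ⟨α₀, _, hαeq, β₀, hβ₀, hle₀, hcase₀⟩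
    · exact hrBdd.1.2 n v (geqSym α) hv h
    · have : α = α₀ := geqSym_inj hαeq
      subst this
      rcases hcase₀ with h | h
      · -- r has ordinal value β₀ ≥ α at n : impossible since r is bounded by α
        exfalso
        rcases hrBdd.2.2.2 β₀ ⟨n, h⟩ with hmem | ⟨β', _, hβeq⟩
        · rcases hle₀ with rfl | hlt
          · exact ZFSet.mem_irrefl _ hmem
          · exact ZFSet.mem_asymm hmem hlt
        · exact hβ₀.2.ne_geqSym hβeq
      · -- r's value at n is geqSym β₀ with α ≤ β₀ ≤ α, so β₀ = α
        have hv' : v = geqSym β₀ := hrBdd.1.2 n v (geqSym β₀) hv h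
        rcases hrBdd.2.2.2 (geqSym β₀) ⟨n, h⟩ with hmem | ⟨β', hβ', hβeq⟩
        · exfalso
          exact (hα.2.mem hmem).ne_geqSym rfl
        · have : β₀ = β' := geqSym_inj hβeq
          subst this
          have hβα : β₀ = α := by
            rcases hle₀ with rfl | hlt
            · rfl
            · rcases hβ' with hmem | rfl
              · exact absurd hmem (ZFSet.mem_asymm hlt)
              · rfl
          rw [hv', hβα]
  -- s is a condition of the unbounded forcing
  have hsP : s ∈ ColGeqP M := by
    have hrP : r ∈ ColGeqP M := (conj1 hM r).2 ⟨α, hα, hrBdd⟩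
    refine ⟨⟨?_, ?_⟩, ?_, ?_, ?_⟩
    · intro w hw
      rcases (hsmem w).1 hw with ⟨h1, _⟩ | ⟨h1, _⟩
      · exact hrP.1.1 w h1
      · exact hp.1.1 w h1
    · intro n v v' h1 h2
      rcases hselim h1 with ⟨hr1, hsm1⟩ | ⟨hp1, hb1⟩ <;>
        rcases hselim h2 with ⟨hr2, hsm2⟩ | ⟨hp2, hb2⟩
      · exact hrP.1.2 n v v' hr1 hr2
      · exact absurd (hsm1 v' hp2) hb2
      · exact absurd (hsm2 v hp1) hb1
      · exact hp.1.2 n v v' hp1 hp2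
    · apply Set.Finite.subset (Set.Finite.union hrP.2.1 hp.2.1)
      intro w hw
      rcases (hsmem w).1 hw with ⟨h1, _⟩ | ⟨h1, _⟩
      · exact Or.inl h1
      · exact Or.inr h1
    · rintro n ⟨v, hv⟩
      rcases (hsmem _).1 hv with ⟨h1, _⟩ | ⟨h1, _⟩
      · exact hrP.2.2.1 n ⟨v, h1⟩
      · exact hp.2.2.1 n ⟨v, h1⟩
    · rintro v ⟨n, hv⟩
      rcases (hsmem _).1 hv with ⟨h1, _⟩ | ⟨h1, _⟩
      · exact hrP.2.2.2 v ⟨n, h1⟩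
      · exact hp.2.2.2 v ⟨n, h1⟩
  -- s extends p
  have hsp : ColGeqLe M s p := by
    constructor
    · rintro n ⟨c, hc⟩
      by_cases hsc : ∀ c' : ZFSet, ZFSet.pair n c' ∈ p → small c'
      · have hnr : n ∈ domZ r := hrπ.1 n ((hπdom n).2 ⟨c, hc⟩)
        obtain ⟨v, hv⟩ := hnr
        exact ⟨v, hspair1 hv hsc⟩
      · push_neg at hsc
        obtain ⟨c', hc', hnc'⟩ := hsc
        exact ⟨c', hspair2 hc' hnc'⟩
    · intro n v hv
      by_cases hsv : small v
      · -- π keeps the value v at n, and r extends π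
        have hπv : ZFSet.pair n v ∈ π := hπpair.2 ⟨v, hv, Or.inl ⟨hsv, rfl⟩⟩
        have hsmalln : ∀ c : ZFSet, ZFSet.pair n c ∈ p → small c := by
          intro c hc
          rw [hp.1.2 n c v hc hv]
          exact hsv
        rcases hrπ.2 n v hπv with h | ⟨α₀, hα₀, rfl, β, hβ, hle, hcase⟩
        · exact Or.inl (hspair1 h hsmalln)
        · rcases hcase with h | h
          · exact Or.inr ⟨α₀, hα₀, rfl, β, hβ, hle, Or.inl (hspair1 h hsmalln)⟩
          · exact Or.inr ⟨α₀, hα₀, rfl, β, hβ, hle, Or.inr (hspair1 h hsmalln)⟩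
      · exact Or.inl (hspair2 hv hsv)
  -- s extends r
  have hsr : ColGeqLe M s r := by
    constructor
    · rintro n ⟨v, hv⟩
      by_cases hsc : ∀ c' : ZFSet, ZFSet.pair n c' ∈ p → small c'
      · exact ⟨v, hspair1 hv hsc⟩
      · push_neg at hsc
        obtain ⟨c', hc', hnc'⟩ := hsc
        exact ⟨c', hspair2 hc' hnc'⟩
    · intro n v hv
      by_cases hsc : ∀ c' : ZFSet, ZFSet.pair n c' ∈ p → small c'
      · exact Or.inl (hspair1 hv hsc)
      · push_neg at hsc
        obtain ⟨c, hc, hnc⟩ := hsc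
        have hvα : v = geqSym α := hrval hc hnc hv
        subst hvα
        -- s's value at n is c, which is ≥ α
        rcases hbigval c (hp.2.2.2 c ⟨n, hc⟩) hnc with ⟨hcord, hcge⟩ | ⟨γ, hγ, rfl, hγge⟩
        · exact Or.inr ⟨α, hα, rfl, c, hcord, hcge, Or.inl (hspair2 hc hnc)⟩
        · exact Or.inr ⟨α, hα, rfl, γ, hγ, Or.inr hγge, Or.inr (hspair2 hc hnc)⟩
  exact ⟨q, hqA, s, hsP, hsp, colGeqLe_trans hsr hrq⟩

/-- For every countable transitive model `M` of `ZF⁻`,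
`Col_≥(ω, Ord)^M` is the union of the increasing `Ord^M`-indexed family of the
suborders `Col_≥(ω, α)`, each of which is (coded by) an element of `M` and is a
complete subforcing: every maximal antichain of `Col_≥(ω, α)` remains maximal in
`Col_≥(ω, Ord)^M`. -/
theorem statement7 (M : ZFSet) (hM : IsCTM M) :
    (∀ p : ZFSet, p ∈ ColGeqP M ↔ ∃ α, IsOrdIn M α ∧ p ∈ ColGeqBddP α) ∧
    (∀ α, IsOrdIn M α → ∃ s : ZFSet, s ∈ M ∧ s.toSet = ColGeqBddP α) ∧
    (∀ α α', IsOrdIn M α → IsOrdIn M α' → α ∈ α' → ColGeqBddP α ⊆ ColGeqBddP α') ∧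
    (∀ α, IsOrdIn M α → ∀ A : Set ZFSet, A ⊆ ColGeqBddP α →
      (∀ p ∈ A, ∀ q ∈ A, p ≠ q →
        ¬ ∃ r ∈ ColGeqBddP α, ColGeqLe M r p ∧ ColGeqLe M r q) →
      (∀ p ∈ ColGeqBddP α, ∃ q ∈ A, ∃ r ∈ ColGeqBddP α, ColGeqLe M r p ∧ ColGeqLe M r q) →
      (∀ p ∈ ColGeqP M, ∃ q ∈ A, ∃ r ∈ ColGeqP M, ColGeqLe M r p ∧ ColGeqLe M r q)) := by
  refine ⟨conj1 hM, fun α hα => exists_code_bdd hM hα,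
    fun α α' hα hα' h => conj3 hα.2 hα'.2 h,
    fun α hα A _ _ hmax => complete_sub hM hα A hmax⟩
end CF
end

section
/- Let M be a countable transitive model of ZF⁻. Then the set of all conditions p in the Friedman forcing 𝔽^M with dom(f_p) = d_p is dense in 𝔽^M. -/
set_option autoImplicit false

attribute [local instance] Classical.propDecidable

namespace CF

/-- A notion of (class) forcing for `(M, C)`: a preorder whose domain and order
relation are classes in `C` and whose conditions are elements of `M`, with a
maximal element `one`. For the first-order setting of a partial order definable
over a model `M` of `ZF⁻`, take `C = DefClasses M`. -/
structure ClassForcing (M : ZFSet) (C : Set (Set ZFSet)) where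
  P : Set ZFSet
  le : ZFSet → ZFSet → Prop
  P_subM : ∀ p ∈ P, p ∈ M
  P_mem : P ∈ C
  le_mem : {x : ZFSet | ∃ p ∈ P, ∃ q ∈ P, le p q ∧ x = ZFSet.pair p q} ∈ C
  le_refl : ∀ p ∈ P, le p p
  le_trans : ∀ p ∈ P, ∀ q ∈ P, ∀ r ∈ P, le p q → le q r → le p r
  one : ZFSet
  one_mem : one ∈ P
  le_one : ∀ p ∈ P, le p one

variable {M : ZFSet} {C : Set (Set ZFSet)}

/-- `p` and `q` are compatible in `F`. -/
def Compat (F : ClassForcing M C) (p q : ZFSet) : Prop :=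
  ∃ r ∈ F.P, F.le r p ∧ F.le r q

/-- `F` is antisymmetric, i.e. an actual partial order. -/
def Antisymmetric (F : ClassForcing M C) : Prop :=
  ∀ p ∈ F.P, ∀ q ∈ F.P, F.le p q → F.le q p → p = q

/-- `F` is separative. -/
def Separative (F : ClassForcing M C) : Prop :=
  ∀ p ∈ F.P, ∀ q ∈ F.P, ¬ F.le p q → ∃ r ∈ F.P, F.le r p ∧ ¬ Compat F r q

/-- `σ` is a `P`-name: every element of `σ` is a pair `⟨τ, p⟩` where `τ` is a
`P`-name and `p ∈ P`. -/
inductive IsName (P : Set ZFSet) : ZFSet → Prop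
  | intro (σ : ZFSet)
      (hshape : ∀ x ∈ σ, ∃ τ p, p ∈ P ∧ x = ZFSet.pair τ p)
      (hrec : ∀ τ p : ZFSet, ZFSet.pair τ p ∈ σ → IsName P τ) : IsName P σ

theorem transGen_mem_of_pair_mem {τ p σ : ZFSet} (h : ZFSet.pair τ p ∈ σ) :
    Relation.TransGen (· ∈ ·) τ σ := by
  have h1 : τ ∈ ({τ, p} : ZFSet) := by simp
  have h2 : ({τ, p} : ZFSet) ∈ ZFSet.pair τ p := by simp [ZFSet.pair]
  exact Relation.TransGen.tail (Relation.TransGen.tail (Relation.TransGen.single h1) h2) h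

/-- The evaluation `σ^G = {τ^G ∣ ∃ p ∈ G, ⟨τ,p⟩ ∈ σ}` of a name by a filter `G`
(defined by recursion on the transitive closure of `∈`; note that any `τ` with
`⟨τ,p⟩ ∈ σ` satisfies `τ ∈ ⋃₀ ⋃₀ σ`). -/
noncomputable def val (G : Set ZFSet) : ZFSet → ZFSet :=
  WellFounded.fix (ZFSet.mem_wf.transGen) fun σ ih =>
    @ZFSet.image
      (fun τ => if h : Relation.TransGen (· ∈ ·) τ σ then ih τ h else ∅)
      (Classical.allZFSetDefinable _)
      (ZFSet.sep (fun τ => ∃ p ∈ G, ZFSet.pair τ p ∈ σ) (ZFSet.sUnion (ZFSet.sUnion σ : ZFSet) : ZFSet))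

/-- `D` is dense in the forcing `(P, ≤)`. -/
def DenseIn (P : Set ZFSet) (le : ZFSet → ZFSet → Prop) (D : Set ZFSet) : Prop :=
  ∀ p ∈ P, ∃ q ∈ D, q ∈ P ∧ le q p

/-- `G` is a filter on `(P, ≤)` which is generic over `(M, C)`, i.e. it meets every
dense subclass of `P` lying in `C`. -/
structure IsGenericRaw (M : ZFSet) (C : Set (Set ZFSet)) (P : Set ZFSet)
    (le : ZFSet → ZFSet → Prop) (G : Set ZFSet) : Prop where
  sub : G ⊆ P
  upward : ∀ p ∈ G, ∀ q ∈ P, le p q → q ∈ G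
  compat : ∀ p ∈ G, ∀ q ∈ G, ∃ r ∈ G, le r p ∧ le r q
  meets : ∀ D ∈ C, D ⊆ P → DenseIn P le D → (D ∩ G).Nonempty

/-- `G` is `F`-generic over `(M, C)`. -/
def IsGeneric (F : ClassForcing M C) (G : Set ZFSet) : Prop :=
  IsGenericRaw M C F.P F.le G

/-- The generic extension `M[G] = {σ^G ∣ σ ∈ M^P}` as a class. -/
def MG (M : ZFSet) (P : Set ZFSet) (G : Set ZFSet) : Set ZFSet :=
  {x | ∃ σ, σ ∈ M ∧ IsName P σ ∧ x = val G σ}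

/-- `Γ` is a class `P`-name over `(M, C)`. -/
def IsClassName (M : ZFSet) (C : Set (Set ZFSet)) (P : Set ZFSet) (Γ : Set ZFSet) : Prop :=
  Γ ∈ C ∧ ∀ x ∈ Γ, ∃ τ p, τ ∈ M ∧ IsName P τ ∧ p ∈ P ∧ x = ZFSet.pair τ p

/-- Evaluation `Γ^G` of a class name. -/
def classVal (G : Set ZFSet) (Γ : Set ZFSet) : Set ZFSet :=
  {x | ∃ τ p, p ∈ G ∧ ZFSet.pair τ p ∈ Γ ∧ x = val G τ}

/-- Encoding of a tuple of sets as a single set (iterated Kuratowski pairs). -/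
def tupleZF : ∀ {k : ℕ}, (Fin k → ZFSet) → ZFSet
  | 0, _ => ∅
  | _ + 1, v => ZFSet.pair (v 0) (tupleZF (fun i => v i.succ))

/-- `p ⊩ φ(σ⃗)` (with class-name parameters `Γ⃗`): for every `F`-generic filter `G`
over `(M, C)` with `p ∈ G`, `φ(σ⃗^G)` holds in `(M[G], ∈, Γ⃗^G)`. -/
def Forces (F : ClassForcing M C) {κ n : ℕ} (φ : CFml κ n)
    (Γ : Fin κ → Set ZFSet) (p : ZFSet) (σ : Fin n → ZFSet) : Prop :=
  ∀ G : Set ZFSet, IsGeneric F G → p ∈ G →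
    SatC (MG M F.P G) (fun i => classVal G (Γ i)) φ (fun i => val G (σ i))

/-- The definability lemma for `φ` over `(M, C)`: for all class-name parameters,
the class of tuples `⟨p, σ⃗⟩` such that `p ⊩ φ(σ⃗)` is in `C`. -/
def DefLemma (F : ClassForcing M C) {κ n : ℕ} (φ : CFml κ n) : Prop :=
  ∀ Γ : Fin κ → Set ZFSet, (∀ i, IsClassName M C F.P (Γ i)) →
    {x : ZFSet | ∃ p ∈ F.P, ∃ σ : Fin n → ZFSet,
      (∀ i, σ i ∈ M ∧ IsName F.P (σ i)) ∧ Forces F φ Γ p σ ∧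
      x = ZFSet.pair p (tupleZF σ)} ∈ C

/-- The truth lemma for `φ` over `(M, C)`: everything true in a generic extension
is forced by some condition in the generic filter. -/
def TruthLemma (F : ClassForcing M C) {κ n : ℕ} (φ : CFml κ n) : Prop :=
  ∀ Γ : Fin κ → Set ZFSet, (∀ i, IsClassName M C F.P (Γ i)) →
    ∀ σ : Fin n → ZFSet, (∀ i, σ i ∈ M ∧ IsName F.P (σ i)) →
      ∀ G : Set ZFSet, IsGeneric F G →
        SatC (MG M F.P G) (fun i => classVal G (Γ i)) φ (fun i => val G (σ i)) →
        ∃ p ∈ G, Forces F φ Γ p σ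

/-- The forcing theorem for `φ` over `(M, C)`. -/
def ForcingThm (F : ClassForcing M C) {κ n : ℕ} (φ : CFml κ n) : Prop :=
  DefLemma F φ ∧ TruthLemma F φ
/-- `⟨d, e, f⟩` are the data of a condition of the Friedman forcing `𝔽^M`:
`d` is a finite subset of `ω`, `e` is a binary acyclic relation on `d`, `f` is
an injective function with `dom f ∈ {∅, d}` and `ran f ⊆ M`, which respects `∈`
whenever `dom f = d`. -/
structure FCond (M : ZFSet) (d e f : ZFSet) : Prop where
  d_sub : ∀ n ∈ d, n ∈ ZFSet.omega
  d_fin : d.toSet.Finite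
  e_sub : ∀ x ∈ e, ∃ a ∈ d, ∃ b ∈ d, x = ZFSet.pair a b
  e_acyc : acyclicZ e
  f_fun : isFuncZ f
  f_inj : isInjZ f
  f_dom : domZ f = (∅ : Set ZFSet) ∨ domZ f = d.toSet
  f_ran : ∀ b, b ∈ ranZ f → b ∈ M
  f_compat : domZ f = d.toSet →
    ∀ i ∈ d, ∀ j ∈ d, ∀ a b : ZFSet, ZFSet.pair i a ∈ f → ZFSet.pair j b ∈ f →
      (ZFSet.pair i j ∈ e ↔ a ∈ b)

/-- The domain of the Friedman forcing `𝔽^M`. -/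
def FriedmanP (M : ZFSet) : Set ZFSet :=
  {x | ∃ d e f, FCond M d e f ∧ x = tripleZ d e f}

/-- The ordering of the Friedman forcing: `p ≤ q` iff `d_q ⊆ d_p`,
`e_p ∩ (d_q × d_q) = e_q` and `f_q ⊆ f_p`. -/
def FriedmanLe (p q : ZFSet) : Prop :=
  ∃ dp ep fp dq eq' fq : ZFSet, p = tripleZ dp ep fp ∧ q = tripleZ dq eq' fq ∧
    (∀ n ∈ dq, n ∈ dp) ∧
    (∀ x : ZFSet, x ∈ eq' ↔ (x ∈ ep ∧ ∃ a ∈ dq, ∃ b ∈ dq, x = ZFSet.pair a b)) ∧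
    (∀ x ∈ fq, x ∈ fp)
/-! ### Auxiliary material for Statement 8 -/

/-- The edge relation coded by the set `e`. -/
def relE (e : ZFSet) (x y : ZFSet) : Prop := ZFSet.pair x y ∈ e

lemma mem_image' {f : ZFSet → ZFSet} {x y : ZFSet} :
    y ∈ @ZFSet.image f (Classical.allZFSetDefinable _) x ↔ ∃ z ∈ x, f z = y :=
  @ZFSet.mem_image f (Classical.allZFSetDefinable _) x y

lemma toSet_image' (f : ZFSet → ZFSet) (x : ZFSet) :
    (@ZFSet.image f (Classical.allZFSetDefinable _) x).toSet = f '' x.toSet :=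
  @ZFSet.coe_image f (Classical.allZFSetDefinable _) x

lemma ZFSet.mem_toSet_s8 (a u : ZFSet) : u ∈ a.toSet ↔ u ∈ a := Iff.rfl

lemma relE_mem_d {d e : ZFSet}
    (hsub : ∀ x ∈ e, ∃ a ∈ d, ∃ b ∈ d, x = ZFSet.pair a b)
    {x y : ZFSet} (h : relE e x y) : x ∈ d ∧ y ∈ d := by
  obtain ⟨a, ha, b, hb, hab⟩ := hsub _ h
  obtain ⟨h1, h2⟩ := ZFSet.pair_injective hab
  exact ⟨h1 ▸ ha, h2 ▸ hb⟩

lemma transGen_relE_mem_d {d e : ZFSet}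
    (hsub : ∀ x ∈ e, ∃ a ∈ d, ∃ b ∈ d, x = ZFSet.pair a b)
    {x y : ZFSet} (h : Relation.TransGen (relE e) x y) : x ∈ d := by
  induction h with
  | single h => exact (relE_mem_d hsub h).1
  | tail _ _ ih => exact ih

lemma relE_wf {d e : ZFSet}
    (hsub : ∀ x ∈ e, ∃ a ∈ d, ∃ b ∈ d, x = ZFSet.pair a b)
    (hfin : d.toSet.Finite) (hacyc : acyclicZ e) : WellFounded (relE e) := by
  have hTfin : ∀ x : ZFSet, {z | Relation.TransGen (relE e) z x}.Finite := fun x =>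
    hfin.subset fun z hz => (ZFSet.mem_toSet_s8 _ _).2 (transGen_relE_mem_d hsub hz)
  have key : ∀ x y, relE e x y →
      {z | Relation.TransGen (relE e) z x}.ncard <
        {z | Relation.TransGen (relE e) z y}.ncard := by
    intro x y hxy
    refine Set.ncard_lt_ncard ⟨fun z hz => hz.tail hxy, fun hs => ?_⟩ (hTfin y)
    exact hacyc x (hs (Relation.TransGen.single hxy))
  exact Subrelation.wf (fun {x y} h => key x y h)
    (InvImage.wf (fun x => {z | Relation.TransGen (relE e) z x}.ncard) Nat.lt_wfRel.wf)

/-- A "tag" attached to `x`: a set containing `∅`, from which `x` is recoverable. -/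
def tagZ (x : ZFSet) : ZFSet := {∅, ZFSet.pair x x}

lemma empty_mem_tagZ (x : ZFSet) : (∅ : ZFSet) ∈ tagZ x :=
  ZFSet.mem_pair.2 (Or.inl rfl)

lemma tagZ_ne_empty (x : ZFSet) : tagZ x ≠ ∅ := fun h =>
  ZFSet.notMem_empty _ (h ▸ empty_mem_tagZ x)

lemma pair_ne_empty (x y : ZFSet) : ZFSet.pair x y ≠ ∅ := by
  intro h
  have : ({x} : ZFSet) ∈ ZFSet.pair x y := ZFSet.mem_pair.2 (Or.inl rfl)
  rw [h] at this
  exact ZFSet.notMem_empty _ this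

lemma tagZ_injective {x y : ZFSet} (h : tagZ x = tagZ y) : x = y := by
  have hx : ZFSet.pair x x ∈ tagZ y := h ▸ ZFSet.mem_pair.2 (Or.inr rfl)
  rcases ZFSet.mem_pair.1 hx with h1 | h1
  · exact absurd h1 (pair_ne_empty x x)
  · exact (ZFSet.pair_injective h1).1

/-- The function realizing the relation `e` by actual membership:
`g x = {tag x} ∪ {g y : y e x}`. -/
noncomputable def gfun (d e : ZFSet) (wf : WellFounded (relE e)) : ZFSet → ZFSet :=
  wf.fix fun x ih =>
    insert (tagZ x)
      (@ZFSet.image (fun y => if h : relE e y x then ih y h else ∅)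
        (Classical.allZFSetDefinable _)
        (ZFSet.sep (fun y => relE e y x) d))

lemma gfun_eq (d e : ZFSet) (wf : WellFounded (relE e)) (x : ZFSet) :
    gfun d e wf x = insert (tagZ x)
      (@ZFSet.image (fun y => if _h : relE e y x then gfun d e wf y else ∅)
        (Classical.allZFSetDefinable _)
        (ZFSet.sep (fun y => relE e y x) d)) :=
  WellFounded.fix_eq wf _ x

lemma mem_gfun {d e : ZFSet} (wf : WellFounded (relE e)) {x z : ZFSet} :
    z ∈ gfun d e wf x ↔ z = tagZ x ∨ ∃ y, y ∈ d ∧ relE e y x ∧ z = gfun d e wf y := by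
  rw [gfun_eq]
  rw [ZFSet.mem_insert_iff, mem_image']
  constructor
  · rintro (h | ⟨y, hy, hz⟩)
    · exact Or.inl h
    · obtain ⟨hyd, hyr⟩ := ZFSet.mem_sep.1 hy
      rw [dif_pos hyr] at hz
      exact Or.inr ⟨y, hyd, hyr, hz.symm⟩
  · rintro (h | ⟨y, hyd, hyr, rfl⟩)
    · exact Or.inl h
    · exact Or.inr ⟨y, ZFSet.mem_sep.2 ⟨hyd, hyr⟩, by rw [dif_pos hyr]⟩

lemma tagZ_mem_gfun {d e : ZFSet} (wf : WellFounded (relE e)) (x : ZFSet) :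
    tagZ x ∈ gfun d e wf x := (mem_gfun wf).2 (Or.inl rfl)

lemma gfun_ne_empty {d e : ZFSet} (wf : WellFounded (relE e)) (x : ZFSet) :
    gfun d e wf x ≠ ∅ := fun h =>
  ZFSet.notMem_empty _ (h ▸ tagZ_mem_gfun wf x)

lemma empty_not_mem_gfun {d e : ZFSet} (wf : WellFounded (relE e)) (x : ZFSet) :
    (∅ : ZFSet) ∉ gfun d e wf x := by
  intro h
  rcases (mem_gfun wf).1 h with h1 | ⟨y, _, _, h1⟩
  · exact tagZ_ne_empty x h1.symm
  · exact gfun_ne_empty wf y h1.symm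

lemma tagZ_ne_gfun {d e : ZFSet} (wf : WellFounded (relE e)) (a x : ZFSet) :
    tagZ a ≠ gfun d e wf x := fun h =>
  empty_not_mem_gfun wf x (h ▸ empty_mem_tagZ a)

lemma gfun_injective {d e : ZFSet} (wf : WellFounded (relE e)) {x y : ZFSet}
    (h : gfun d e wf x = gfun d e wf y) : x = y := by
  have hx : tagZ x ∈ gfun d e wf y := h ▸ tagZ_mem_gfun wf x
  rcases (mem_gfun wf).1 hx with h1 | ⟨z, _, _, h1⟩
  · exact tagZ_injective h1
  · exact absurd h1 (tagZ_ne_gfun wf x z)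

lemma gfun_mem_iff {d e : ZFSet}
    (hsub : ∀ x ∈ e, ∃ a ∈ d, ∃ b ∈ d, x = ZFSet.pair a b)
    (wf : WellFounded (relE e)) (i j : ZFSet) :
    gfun d e wf i ∈ gfun d e wf j ↔ relE e i j := by
  constructor
  · intro h
    rcases (mem_gfun wf).1 h with h1 | ⟨y, _, hyr, h1⟩
    · exact absurd h1.symm (tagZ_ne_gfun wf j i)
    · exact (gfun_injective wf h1) ▸ hyr
  · intro h
    exact (mem_gfun wf).2 (Or.inr ⟨i, (relE_mem_d hsub h).1, h, rfl⟩)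

lemma insert_mem_ctm {M : ZFSet} (hM : IsCTM M) {x s : ZFSet}
    (hx : x ∈ M) (hs : s ∈ M) : insert x s ∈ M := by
  have h1 : ({x, x} : ZFSet) ∈ M := hM.pairing x hx x hx
  have h2 : ({({x, x} : ZFSet), s} : ZFSet) ∈ M := hM.pairing _ h1 s hs
  have h3 := hM.union _ h2
  have he : (ZFSet.sUnion ({({x, x} : ZFSet), s} : ZFSet) : ZFSet) = insert x s := by
    ext z
    rw [ZFSet.mem_sUnion, ZFSet.mem_insert_iff]
    constructor
    · rintro ⟨t, ht, hz⟩
      rcases ZFSet.mem_pair.1 ht with rfl | rfl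
      · rcases ZFSet.mem_pair.1 hz with rfl | rfl <;> exact Or.inl rfl
      · exact Or.inr hz
    · rintro (rfl | hz)
      · exact ⟨{z, z}, ZFSet.mem_pair.2 (Or.inl rfl), ZFSet.mem_pair.2 (Or.inl rfl)⟩
      · exact ⟨s, ZFSet.mem_pair.2 (Or.inr rfl), hz⟩
  rwa [he] at h3

lemma pair_mem_ctm {M : ZFSet} (hM : IsCTM M) {x y : ZFSet}
    (hx : x ∈ M) (hy : y ∈ M) : ZFSet.pair x y ∈ M := by
  have h1 : ({x, x} : ZFSet) ∈ M := hM.pairing x hx x hx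
  have hxx : ({x, x} : ZFSet) = {x} := by
    ext z; rw [ZFSet.mem_pair, ZFSet.mem_singleton]; tauto
  rw [hxx] at h1
  have h2 : ({x, y} : ZFSet) ∈ M := hM.pairing x hx y hy
  exact hM.pairing _ h1 _ h2

lemma tagZ_mem_ctm {M : ZFSet} (hM : IsCTM M) {x : ZFSet} (hx : x ∈ M) :
    tagZ x ∈ M :=
  hM.pairing _ hM.empty_mem _ (pair_mem_ctm hM hx hx)

lemma finite_mem_ctm {M : ZFSet} (hM : IsCTM M) (s : ZFSet)
    (hfin : s.toSet.Finite) (hmem : ∀ x ∈ s, x ∈ M) : s ∈ M := by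
  have H : ∀ (n : ℕ) (s : ZFSet), s.toSet.ncard = n → s.toSet.Finite →
      (∀ x ∈ s, x ∈ M) → s ∈ M := by
    intro n
    induction n using Nat.strong_induction_on with
    | _ n ih =>
      intro s hn hfin hmem
      rcases ZFSet.eq_empty_or_nonempty s with rfl | ⟨x, hx⟩
      · exact hM.empty_mem
      · rw [SetLike.mem_coe] at hx
        set s' := ZFSet.sep (fun y => ¬ y = x) s with hs'
        have hsub' : s'.toSet ⊆ s.toSet := by
          intro z hz
          rw [ZFSet.mem_toSet_s8] at hz ⊢
          exact (ZFSet.mem_sep.1 hz).1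
        have hfin' : s'.toSet.Finite := hfin.subset hsub'
        have hlt : s'.toSet.ncard < n := by
          rw [← hn]
          refine Set.ncard_lt_ncard ⟨hsub', fun hs => ?_⟩ hfin
          have hx' : x ∈ s'.toSet := hs ((ZFSet.mem_toSet_s8 _ _).2 hx)
          rw [ZFSet.mem_toSet_s8] at hx'
          exact (ZFSet.mem_sep.1 hx').2 rfl
        have hmem' : s' ∈ M := ih _ hlt s' rfl hfin'
          (fun z hz => hmem z (ZFSet.mem_sep.1 hz).1)
        have hse : s = insert x s' := by
          ext z
          rw [ZFSet.mem_insert_iff, hs', ZFSet.mem_sep]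
          by_cases hzx : z = x
          · subst hzx; exact ⟨fun _ => Or.inl rfl, fun _ => hx⟩
          · constructor
            · intro hz; exact Or.inr ⟨hz, hzx⟩
            · rintro (rfl | ⟨hz, _⟩)
              · exact hx
              · exact hz
        rw [hse]
        exact insert_mem_ctm hM (hmem x hx) hmem'
  exact H _ s rfl hfin hmem

lemma gfun_mem_ctm {M d e : ZFSet} (hM : IsCTM M)
    (hd : ∀ n ∈ d, n ∈ ZFSet.omega) (hfin : d.toSet.Finite)
    (wf : WellFounded (relE e)) :
    ∀ x ∈ d, gfun d e wf x ∈ M := by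
  have hxM : ∀ x ∈ d, x ∈ M := fun x hx =>
    hM.transitive.mem_trans (hd x hx) hM.infinity
  intro x
  refine WellFounded.induction wf
    (C := fun x => x ∈ d → gfun d e wf x ∈ M) x ?_
  intro x ih hx
  rw [gfun_eq]
  refine insert_mem_ctm hM (tagZ_mem_ctm hM (hxM x hx)) ?_
  refine finite_mem_ctm hM _ ?_ ?_
  · rw [toSet_image']
    refine Set.Finite.image _ (hfin.subset ?_)
    intro z hz
    rw [ZFSet.mem_toSet_s8] at hz ⊢
    exact (ZFSet.mem_sep.1 hz).1
  · intro z hz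
    rw [mem_image'] at hz
    obtain ⟨y, hy, hzy⟩ := hz
    obtain ⟨hyd, hyr⟩ := ZFSet.mem_sep.1 hy
    rw [dif_pos hyr] at hzy
    exact hzy ▸ ih y hyr hyd

/-- For every countable transitive model `M` of `ZF⁻`, the set of
conditions `p = ⟨d_p, e_p, f_p⟩` of the Friedman forcing `𝔽^M` with
`dom f_p = d_p` is dense in `𝔽^M`. -/
theorem statement8 (M : ZFSet) (hM : IsCTM M) :
    ∀ p ∈ FriedmanP M, ∃ q ∈ FriedmanP M, FriedmanLe q p ∧
      ∃ d e f, FCond M d e f ∧ q = tripleZ d e f ∧ domZ f = d.toSet := by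
  rintro p ⟨d, e, f, hc, rfl⟩
  rcases hc.f_dom with hdom | hdom
  · -- `dom f = ∅`, so `f` is empty; build a total extension.
    have hfempty : ∀ x, x ∉ f := by
      intro x hx
      obtain ⟨a, b, rfl⟩ := hc.f_fun.1 x hx
      have ha : a ∈ domZ f := ⟨b, hx⟩
      rw [hdom] at ha
      exact ha
    have wf : WellFounded (relE e) := relE_wf hc.e_sub hc.d_fin hc.e_acyc
    set g : ZFSet → ZFSet := gfun d e wf with hg
    set f' : ZFSet := @ZFSet.image (fun i => ZFSet.pair i (g i))
      (Classical.allZFSetDefinable _) d with hf'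
    have hmemf' : ∀ z, z ∈ f' ↔ ∃ i, i ∈ d ∧ z = ZFSet.pair i (g i) := by
      intro z
      rw [hf', mem_image']
      constructor
      · rintro ⟨i, hi, h⟩; exact ⟨i, hi, h.symm⟩
      · rintro ⟨i, hi, h⟩; exact ⟨i, hi, h.symm⟩
    have hval : ∀ a b : ZFSet, ZFSet.pair a b ∈ f' → a ∈ d ∧ b = g a := by
      intro a b hab
      obtain ⟨i, hi, hp⟩ := (hmemf' _).1 hab
      obtain ⟨h1, h2⟩ := ZFSet.pair_injective hp
      subst h1
      exact ⟨hi, h2⟩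
    have hdom' : domZ f' = d.toSet := by
      ext a
      constructor
      · rintro ⟨b, hab⟩
        exact (ZFSet.mem_toSet_s8 _ _).2 (hval a b hab).1
      · intro ha
        rw [ZFSet.mem_toSet_s8] at ha
        exact ⟨g a, (hmemf' _).2 ⟨a, ha, rfl⟩⟩
    have hcond : FCond M d e f' := by
      refine ⟨hc.d_sub, hc.d_fin, hc.e_sub, hc.e_acyc, ?_, ?_, Or.inr hdom', ?_, ?_⟩
      · constructor
        · intro x hx
          obtain ⟨i, _, hp⟩ := (hmemf' _).1 hx
          exact ⟨i, g i, hp⟩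
        · intro a b b' h1 h2
          obtain ⟨_, hb⟩ := hval a b h1
          obtain ⟨_, hb'⟩ := hval a b' h2
          rw [hb, hb']
      · intro a a' b h1 h2
        obtain ⟨_, hb⟩ := hval a b h1
        obtain ⟨_, hb'⟩ := hval a' b h2
        exact gfun_injective wf (hb ▸ hb')
      · rintro b ⟨a, hab⟩
        obtain ⟨ha, rfl⟩ := hval a b hab
        exact gfun_mem_ctm hM hc.d_sub hc.d_fin wf a ha
      · intro _ i _ j _ a b h1 h2
        obtain ⟨_, rfl⟩ := hval i a h1
        obtain ⟨_, rfl⟩ := hval j b h2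
        exact (gfun_mem_iff hc.e_sub wf i j).symm
    refine ⟨tripleZ d e f', ⟨d, e, f', hcond, rfl⟩, ?_, d, e, f', hcond, rfl, hdom'⟩
    exact ⟨d, e, f', d, e, f, rfl, rfl, fun n hn => hn,
      fun x => ⟨fun hx => ⟨hx, hc.e_sub x hx⟩, fun h => h.1⟩,
      fun x hx => absurd hx (hfempty x)⟩
  · -- already total: take `q = p`.
    refine ⟨tripleZ d e f, ⟨d, e, f, hc, rfl⟩, ?_, d, e, f, hc, rfl, hdom⟩
    exact ⟨d, e, f, d, e, f, rfl, rfl, fun n hn => hn,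
      fun x => ⟨fun hx => ⟨hx, hc.e_sub x hx⟩, fun h => h.1⟩, fun x hx => hx⟩
end CF
end
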